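/- arXiv:2310.11907 — 5 statements merged into one kernel-verified Lean document; each statement's English description precedes it below -/
import Mathlib

section
/- Let Γ be a signed graph of order m+1 with ordered Laplacian spectrum (α_1, α_2, …, α_{m+1}), and let Γ' be the signed graph of order m obtained from Γ by deleting any one vertex v together with all its incident edges, with ordered Laplacian spectrum (β_1, β_2, …, β_m). Then α_p ≤ β_p + 1 ≤ α_{p+1} + 1 for every p = 1, 2, …, m. -/
open Polynomial

/-- A signed adjacency matrix: symmetric, zero diagonal, entries in {-1,0,1}. -/
def IsSignedAdj {n : ℕ} (A : Matrix (Fin n) (Fin n) ℝ) : Prop :=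
  A.IsSymm ∧ (∀ i, A i i = 0) ∧ ∀ i j, A i j = -1 ∨ A i j = 0 ∨ A i j = 1

/-- Degree of vertex `i`: number of neighbours. -/
noncomputable def deg {n : ℕ} (A : Matrix (Fin n) (Fin n) ℝ) (i : Fin n) : ℕ :=
  {j | A i j ≠ 0}.ncard

/-- Negative degree of vertex `i`. -/
noncomputable def negDeg {n : ℕ} (A : Matrix (Fin n) (Fin n) ℝ) (i : Fin n) : ℕ :=
  {j | A i j = -1}.ncard

/-- Positive degree of vertex `i`. -/
noncomputable def posDeg {n : ℕ} (A : Matrix (Fin n) (Fin n) ℝ) (i : Fin n) : ℕ :=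
  {j | A i j = 1}.ncard

/-- Laplacian matrix `L = D - A`. -/
noncomputable def lap {n : ℕ} (A : Matrix (Fin n) (Fin n) ℝ) : Matrix (Fin n) (Fin n) ℝ :=
  Matrix.diagonal (fun i => (deg A i : ℝ)) - A

/-- Net-Laplacian matrix `N = D± - A`, where `D±` is the diagonal of signed degrees. -/
noncomputable def netLap {n : ℕ} (A : Matrix (Fin n) (Fin n) ℝ) : Matrix (Fin n) (Fin n) ℝ :=
  Matrix.diagonal (fun i => ∑ j, A i j) - A

/-- Normalized net-Laplacian `D^{-1/2} N D^{-1/2}`. -/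
noncomputable def normNetLap {n : ℕ} (A : Matrix (Fin n) (Fin n) ℝ) :
    Matrix (Fin n) (Fin n) ℝ :=
  Matrix.diagonal (fun i => (Real.sqrt (deg A i))⁻¹) * netLap A *
    Matrix.diagonal (fun i => (Real.sqrt (deg A i))⁻¹)

/-- `μ` is the ordered (non-decreasing) spectrum of `M` : it is monotone and lists the
eigenvalues of `M` with multiplicity, i.e. the characteristic polynomial splits as
`∏ (X - μ i)`. -/
def IsOrderedSpectrum {n : ℕ} (M : Matrix (Fin n) (Fin n) ℝ) (μ : Fin n → ℝ) : Prop :=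
  Monotone μ ∧ M.charpoly = ∏ i, (X - C (μ i))

/-- Deleting the edge `uv`: set the `(u,v)` and `(v,u)` entries to `0`. -/
def deleteEdge {n : ℕ} (A : Matrix (Fin n) (Fin n) ℝ) (u v : Fin n) :
    Matrix (Fin n) (Fin n) ℝ :=
  Matrix.of fun i j => if (i = u ∧ j = v) ∨ (i = v ∧ j = u) then 0 else A i j

/-- Deleting the vertex `v`: principal submatrix omitting row/column `v`. -/
def deleteVertex {n : ℕ} (A : Matrix (Fin (n+1)) (Fin (n+1)) ℝ) (v : Fin (n+1)) :
    Matrix (Fin n) (Fin n) ℝ :=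
  A.submatrix v.succAbove v.succAbove

/-! ### Auxiliary material for the proof -/

namespace Stmt0Aux

open Matrix

variable {n : ℕ}

lemma charpoly_similar (M V W : Matrix (Fin n) (Fin n) ℝ) (hWV : W * V = 1) :
    (W * M * V).charpoly = M.charpoly := by
  have hform : charmatrix (W * M * V) = (W.map C) * charmatrix M * (V.map C) := by
    rw [charmatrix, charmatrix]
    rw [Matrix.mul_sub, Matrix.sub_mul]
    congr 1
    · have h1 : (W.map C) * Matrix.scalar (Fin n) (X : ℝ[X]) =
          Matrix.scalar (Fin n) (X : ℝ[X]) * (W.map C) :=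
        (Matrix.scalar_commute (X : ℝ[X]) (fun r => Commute.all _ _) (W.map C)).symm
      rw [h1, Matrix.mul_assoc, ← Matrix.map_mul, hWV, Matrix.map_one _ (map_zero C) (map_one C),
        Matrix.mul_one]
    · rw [RingHom.mapMatrix_apply, RingHom.mapMatrix_apply, ← Matrix.map_mul, ← Matrix.map_mul]
  rw [Matrix.charpoly, Matrix.charpoly, hform, Matrix.det_mul, Matrix.det_mul]
  have h2 : (W.map C).det * (charmatrix M).det * (V.map C).det
      = (charmatrix M).det * ((W.map C) * (V.map C)).det := by
    rw [Matrix.det_mul]; ring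
  rw [h2, ← Matrix.map_mul, hWV, Matrix.map_one _ (map_zero C) (map_one C), Matrix.det_one,
    mul_one]

lemma charpoly_eq_prod_eigenvalues (M : Matrix (Fin n) (Fin n) ℝ) (hM : M.IsHermitian) :
    M.charpoly = ∏ i, (X - C (hM.eigenvalues i)) := by
  set U : Matrix (Fin n) (Fin n) ℝ := (hM.eigenvectorUnitary : Matrix (Fin n) (Fin n) ℝ) with hU
  have hdiag : (star U) * M * U = Matrix.diagonal hM.eigenvalues := by
    have h := hM.conjStarAlgAut_star_eigenvectorUnitary
    simpa using h
  have hWV : (star U) * U = 1 := by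
    exact Unitary.coe_star_mul_self hM.eigenvectorUnitary
  have h1 := charpoly_similar M U (star U) hWV
  rw [hdiag] at h1
  rw [← h1]
  rw [Matrix.charpoly_of_upperTriangular _ (Matrix.blockTriangular_diagonal hM.eigenvalues)]
  simp

lemma spectrum_perm (M : Matrix (Fin n) (Fin n) ℝ) (hM : M.IsHermitian) {μ : Fin n → ℝ}
    (hμ : IsOrderedSpectrum M μ) : ∃ σ : Equiv.Perm (Fin n), μ = hM.eigenvalues ∘ σ := by
  obtain ⟨hmono, hcp⟩ := hμ
  have hprod : ∏ i, (X - C (μ i)) = ∏ i, (X - C (hM.eigenvalues i)) := by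
    rw [← hcp, charpoly_eq_prod_eigenvalues M hM]
  have hms : (Finset.univ.val.map μ) = (Finset.univ.val.map hM.eigenvalues) := by
    have h1 := Polynomial.roots_multiset_prod_X_sub_C (Finset.univ.val.map μ)
    have h2 := Polynomial.roots_multiset_prod_X_sub_C (Finset.univ.val.map hM.eigenvalues)
    rw [Multiset.map_map] at h1 h2
    have h3 : (Finset.univ.val.map fun i => X - C (μ i)).prod
        = (Finset.univ.val.map fun i => X - C (hM.eigenvalues i)).prod := by
      simpa [Finset.prod] using hprod
    rw [← h1, ← h2]
    simp only [Function.comp_def]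
    rw [h3]
  refine ⟨Tuple.sort hM.eigenvalues, ?_⟩
  have hmono2 : Monotone (hM.eigenvalues ∘ Tuple.sort hM.eigenvalues) := Tuple.monotone_sort _
  have hperm : (List.ofFn μ).Perm (List.ofFn (hM.eigenvalues ∘ Tuple.sort hM.eigenvalues)) := by
    have e1 := Equiv.Perm.ofFn_comp_perm (Tuple.sort hM.eigenvalues) hM.eigenvalues
    have e2 : (↑(List.ofFn μ) : Multiset ℝ) = ↑(List.ofFn hM.eigenvalues) := by
      rw [← Fin.univ_val_map, ← Fin.univ_val_map]; exact hms
    exact (Multiset.coe_eq_coe.mp e2).trans e1.symm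
  exact List.ofFn_injective (List.Perm.eq_of_sortedLE
    (List.sortedLE_ofFn_iff.mpr hmono) (List.sortedLE_ofFn_iff.mpr hmono2) hperm)

local notation "⟪" x ", " y "⟫" => inner (𝕜 := ℝ) x y

lemma dot_inner (u v : EuclideanSpace ℝ (Fin n)) :
    ⟪u, v⟫ = (u : Fin n → ℝ) ⬝ᵥ (v : Fin n → ℝ) := by
  simp [PiLp.inner_apply, dotProduct, RCLike.inner_apply, starRingEnd_apply, mul_comm]

lemma dot_sum {ι : Type*} (s : Finset ι) (x : Fin n → ℝ) (f : ι → Fin n → ℝ) :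
    x ⬝ᵥ (∑ j ∈ s, f j) = ∑ j ∈ s, x ⬝ᵥ f j := by
  simp only [dotProduct, Finset.sum_apply, Finset.mul_sum]
  exact Finset.sum_comm

lemma mulVec_sum' {ι : Type*} (s : Finset ι) (M : Matrix (Fin n) (Fin n) ℝ)
    (f : ι → Fin n → ℝ) : M *ᵥ (∑ j ∈ s, f j) = ∑ j ∈ s, M *ᵥ f j := by
  have h := map_sum (Matrix.mulVecLin M) f s
  simpa only [Matrix.mulVecLin_apply] using h

lemma exists_coords (M : Matrix (Fin n) (Fin n) ℝ) (hM : M.IsHermitian) {μ : Fin n → ℝ}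
    (hμ : IsOrderedSpectrum M μ) :
    ∃ c : Fin n → ((Fin n → ℝ) →ₗ[ℝ] ℝ),
      (∀ x, x ⬝ᵥ (M *ᵥ x) = ∑ i, μ i * (c i x)^2) ∧
      (∀ x, x ⬝ᵥ x = ∑ i, (c i x)^2) := by
  obtain ⟨σ, hσ⟩ := spectrum_perm M hM hμ
  set b := hM.eigenvectorBasis with hb
  set w : Fin n → (Fin n → ℝ) := fun j => ⇑(b j) with hw
  have hrepr : ∀ (x : EuclideanSpace ℝ (Fin n)) (i : Fin n), b.repr x i = w i ⬝ᵥ x := by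
    intro x i
    rw [b.repr_apply_apply]
    exact dot_inner (b i) x
  have hcomp : ∀ x : Fin n → ℝ, x = ∑ j, (w j ⬝ᵥ x) • w j := by
    intro x
    have h := congrArg WithLp.ofLp (b.sum_repr (WithLp.toLp 2 x)).symm
    simp_rw [hrepr] at h
    simpa [WithLp.ofLp_sum, w] using h
  have heig : ∀ j, M *ᵥ w j = hM.eigenvalues j • w j := fun j => hM.mulVec_eigenvectorBasis j
  have hMx : ∀ x : Fin n → ℝ, x ⬝ᵥ (M *ᵥ x) = ∑ j, hM.eigenvalues j * (w j ⬝ᵥ x)^2 := by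
    intro x
    have h1 : M *ᵥ x = ∑ k, (w k ⬝ᵥ x) • (hM.eigenvalues k • w k) := by
      conv_lhs => rw [hcomp x]
      rw [mulVec_sum']
      refine Finset.sum_congr rfl fun k _ => ?_
      rw [Matrix.mulVec_smul, heig k]
    rw [h1]
    rw [dot_sum]
    refine Finset.sum_congr rfl fun k _ => ?_
    rw [dotProduct_smul, dotProduct_smul, dotProduct_comm]
    simp [smul_eq_mul]; ring
  have hxx : ∀ x : Fin n → ℝ, x ⬝ᵥ x = ∑ j, (w j ⬝ᵥ x)^2 := by
    intro x
    conv_lhs => rw [show x ⬝ᵥ x = x ⬝ᵥ (∑ j, (w j ⬝ᵥ x) • w j) from by rw [← hcomp x]]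
    rw [dot_sum]
    refine Finset.sum_congr rfl fun k _ => ?_
    rw [dotProduct_smul, dotProduct_comm]
    simp [smul_eq_mul]; ring
  refine ⟨fun i => ⟨⟨fun x => w (σ i) ⬝ᵥ x, fun a c => dotProduct_add _ _ _⟩,
      fun r a => ?_⟩, fun x => ?_, fun x => ?_⟩
  · simp [dotProduct_smul, smul_eq_mul]
  · rw [hMx x, ← Equiv.sum_comp σ (fun j => hM.eigenvalues j * (w j ⬝ᵥ x)^2)]
    refine Finset.sum_congr rfl fun i _ => ?_
    simp [hσ, Function.comp]
  · rw [hxx x, ← Equiv.sum_comp σ (fun j => (w j ⬝ᵥ x)^2)]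
    rfl

lemma exists_ne_zero_ker {V W : Type*} [AddCommGroup V] [Module ℝ V] [FiniteDimensional ℝ V]
    [AddCommGroup W] [Module ℝ W] [FiniteDimensional ℝ W]
    (F : V →ₗ[ℝ] W) (h : Module.finrank ℝ W < Module.finrank ℝ V) :
    ∃ x, x ≠ 0 ∧ F x = 0 := by
  by_contra hc
  push_neg at hc
  have hinj : Function.Injective F := by
    rw [← LinearMap.ker_eq_bot, Submodule.eq_bot_iff]
    intro x hx
    by_contra hx0
    exact hc x hx0 hx
  exact absurd (LinearMap.finrank_le_finrank_of_injective hinj) (not_le.mpr h)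

lemma lap_isHermitian {k : ℕ} (A : Matrix (Fin k) (Fin k) ℝ) (h : A.IsSymm) :
    (lap A).IsHermitian := by
  have hsymm : ∀ i j, A j i = A i j := fun i j => congrFun (congrFun h i) j
  unfold Matrix.IsHermitian
  ext i j
  rw [Matrix.conjTranspose_apply, star_trivial]
  unfold lap
  rcases eq_or_ne i j with rfl | hne
  · simp
  · simp [Matrix.diagonal_apply_ne _ hne, Matrix.diagonal_apply_ne _ (Ne.symm hne), hsymm i j]

lemma deleteVertex_isSymm (A : Matrix (Fin (n+1)) (Fin (n+1)) ℝ) (h : A.IsSymm)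
    (v : Fin (n+1)) : (deleteVertex A v).IsSymm := by
  have hsymm : ∀ i j, A j i = A i j := fun i j => congrFun (congrFun h i) j
  unfold Matrix.IsSymm
  ext i j
  rw [Matrix.transpose_apply]
  exact hsymm _ _

lemma deg_cast (k : ℕ) (B : Matrix (Fin k) (Fin k) ℝ) (i : Fin k) :
    (deg B i : ℝ) = ∑ l, (if B i l ≠ 0 then (1:ℝ) else 0) := by
  classical
  rw [deg, Set.ncard_eq_toFinset_card', Set.toFinset_setOf, Finset.card_filter]
  push_cast
  rfl

lemma deg_succAbove (A : Matrix (Fin (n+1)) (Fin (n+1)) ℝ) (v : Fin (n+1)) (j : Fin n) :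
    (deg A (v.succAbove j) : ℝ)
      = deg (deleteVertex A v) j + (if A (v.succAbove j) v ≠ 0 then (1:ℝ) else 0) := by
  classical
  rw [deg_cast, deg_cast]
  rw [Fin.sum_univ_succAbove (fun l => if A (v.succAbove j) l ≠ 0 then (1:ℝ) else 0) v]
  rw [add_comm]
  rfl

lemma lap_succAbove (A : Matrix (Fin (n+1)) (Fin (n+1)) ℝ) (v : Fin (n+1)) (j k : Fin n) :
    lap A (v.succAbove j) (v.succAbove k)
      = lap (deleteVertex A v) j k
        + (if j = k then (if A (v.succAbove j) v ≠ 0 then (1:ℝ) else 0) else 0) := by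
  classical
  rcases eq_or_ne j k with rfl | hne
  · simp only [lap, Matrix.sub_apply, Matrix.diagonal_apply_eq, eq_self_iff_true, if_true]
    have h := deg_succAbove A v j
    have h2 : deleteVertex A v j j = A (v.succAbove j) (v.succAbove j) := rfl
    rw [h2] at *
    linarith [h]
  · have h2 : v.succAbove j ≠ v.succAbove k := fun h => hne (Fin.succAbove_right_injective h)
    simp only [lap, Matrix.sub_apply, Matrix.diagonal_apply_ne _ hne,
      Matrix.diagonal_apply_ne _ h2, if_neg hne, add_zero]
    rfl

lemma dot_ins (v : Fin (n+1)) (y : Fin n → ℝ) :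
    (v.insertNth (0:ℝ) y) ⬝ᵥ (v.insertNth (0:ℝ) y) = y ⬝ᵥ y := by
  unfold dotProduct
  rw [Fin.sum_univ_succAbove _ v]
  simp

lemma quad_ins (A : Matrix (Fin (n+1)) (Fin (n+1)) ℝ) (v : Fin (n+1)) (y : Fin n → ℝ) :
    (v.insertNth (0:ℝ) y) ⬝ᵥ (lap A *ᵥ (v.insertNth (0:ℝ) y))
      = y ⬝ᵥ (lap (deleteVertex A v) *ᵥ y)
        + ∑ j, (if A (v.succAbove j) v ≠ 0 then (1:ℝ) else 0) * (y j)^2 := by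
  classical
  set x : Fin (n+1) → ℝ := v.insertNth (0:ℝ) y with hx
  have hxv : x v = 0 := by simp [hx]
  have hxs : ∀ j, x (v.succAbove j) = y j := fun j => by simp [hx]
  unfold dotProduct Matrix.mulVec
  rw [Fin.sum_univ_succAbove _ v]
  simp only [hxv, zero_mul, zero_add, hxs]
  unfold dotProduct
  have hinner : ∀ j : Fin n, (∑ k, lap A (v.succAbove j) k * x k)
      = (∑ k, lap (deleteVertex A v) j k * y k)
        + (if A (v.succAbove j) v ≠ 0 then (1:ℝ) else 0) * y j := by
    intro j
    rw [Fin.sum_univ_succAbove _ v]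
    simp only [hxv, mul_zero, zero_add, hxs]
    have h3 : ∀ k, lap A (v.succAbove j) (v.succAbove k) * y k
        = lap (deleteVertex A v) j k * y k
          + (if j = k then (if A (v.succAbove j) v ≠ 0 then (1:ℝ) else 0) else 0) * y k := by
      intro k
      rw [lap_succAbove, add_mul]
    rw [Finset.sum_congr rfl (fun k _ => h3 k), Finset.sum_add_distrib]
    congr 1
    rw [Finset.sum_congr rfl (fun k _ => by rw [ite_mul, zero_mul])]
    exact Finset.sum_ite_eq Finset.univ j
      (fun k => (if A (v.succAbove j) v ≠ 0 then (1:ℝ) else 0) * y k) |>.trans (by simp)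
  rw [Finset.sum_congr rfl (fun j _ => by rw [hinner j])]
  rw [Finset.sum_congr rfl (fun j _ => mul_add (y j) _ _), Finset.sum_add_distrib]
  congr 1
  refine Finset.sum_congr rfl fun j _ => ?_
  ring

/-- Extension by zero at `v`, as a linear map. -/
def extLin (v : Fin (n+1)) : (Fin n → ℝ) →ₗ[ℝ] (Fin (n+1) → ℝ) where
  toFun y := v.insertNth (0:ℝ) y
  map_add' a b := by
    funext i
    refine Fin.succAboveCases v ?_ ?_ i <;> simp
  map_smul' c a := by
    funext i
    refine Fin.succAboveCases v ?_ ?_ i <;> simp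

lemma dot_self_pos {k : ℕ} {x : Fin k → ℝ} (hx : x ≠ 0) : 0 < x ⬝ᵥ x := by
  have h1 : 0 ≤ x ⬝ᵥ x := Finset.sum_nonneg fun i _ => mul_self_nonneg (x i)
  have h2 : x ⬝ᵥ x ≠ 0 := fun h => hx (dotProduct_self_eq_zero.mp h)
  exact lt_of_le_of_ne h1 (Ne.symm h2)

end Stmt0Aux

open Stmt0Aux Matrix

/-- deleting any vertex from a signed graph, the ordered Laplacian spectra
satisfy alpha_p <= beta_p + 1 <= alpha_{p+1} + 1 for p = 1,...,m. -/
theorem stmt0 (m : ℕ) (A : Matrix (Fin (m+1)) (Fin (m+1)) ℝ) (hA : IsSignedAdj A)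
    (v : Fin (m+1)) (α : Fin (m+1) → ℝ) (β : Fin m → ℝ)
    (hα : IsOrderedSpectrum (lap A) α)
    (hβ : IsOrderedSpectrum (lap (deleteVertex A v)) β) :
    ∀ p : Fin m, α p.castSucc ≤ β p + 1 ∧ β p + 1 ≤ α p.succ + 1 := by
  classical
  obtain ⟨hAsymm, -, -⟩ := hA
  have hL : (lap A).IsHermitian := lap_isHermitian _ hAsymm
  have hB : (lap (deleteVertex A v)).IsHermitian :=
    lap_isHermitian _ (deleteVertex_isSymm A hAsymm v)
  obtain ⟨cL, hLq, hLn⟩ := exists_coords _ hL hα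
  obtain ⟨cB, hBq, hBn⟩ := exists_coords _ hB hβ
  have hαmono := hα.1
  have hβmono := hβ.1
  intro p
  have hpm : (p : ℕ) < m := p.2
  constructor
  · -- `α p.castSucc ≤ β p + 1`
    set F : (Fin (m+1) → ℝ) →ₗ[ℝ]
        ((↥(Finset.Iio (p.castSucc : Fin (m+1))) → ℝ) × ℝ × (↥(Finset.Ioi p) → ℝ)) :=
      LinearMap.prod (LinearMap.pi fun i => cL i.1)
        (LinearMap.prod (LinearMap.proj v)
          (LinearMap.pi fun j => (cB j.1).comp (LinearMap.funLeft ℝ ℝ v.succAbove))) with hF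
    have hdim : Module.finrank ℝ
        ((↥(Finset.Iio (p.castSucc : Fin (m+1))) → ℝ) × ℝ × (↥(Finset.Ioi p) → ℝ))
        < Module.finrank ℝ (Fin (m+1) → ℝ) := by
      rw [Module.finrank_prod, Module.finrank_prod, Module.finrank_pi, Module.finrank_pi,
        Module.finrank_self, Module.finrank_pi, Fintype.card_coe, Fintype.card_coe,
        Fintype.card_fin, Fin.card_Iio, Fin.card_Ioi, Fin.coe_castSucc]
      omega
    obtain ⟨x, hx0, hFx⟩ := exists_ne_zero_ker F hdim
    rw [hF] at hFx
    simp only [LinearMap.prod_apply, Function.prod, Prod.mk_eq_zero] at hFx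
    obtain ⟨h1, h2, h3⟩ := hFx
    have hc1 : ∀ i : Fin (m+1), i < p.castSucc → cL i x = 0 := by
      intro i hi
      have := congrFun h1 ⟨i, Finset.mem_Iio.mpr hi⟩
      simpa [LinearMap.pi_apply] using this
    have hc2 : x v = 0 := h2
    have hc3 : ∀ j : Fin m, p < j → cB j (fun k => x (v.succAbove k)) = 0 := by
      intro j hj
      have := congrFun h3 ⟨j, Finset.mem_Ioi.mpr hj⟩
      have h' : cB j ((LinearMap.funLeft ℝ ℝ v.succAbove) x) = 0 := by
        simpa [LinearMap.pi_apply, LinearMap.comp_apply, LinearMap.funLeft_apply] using this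
      exact h'
    set y : Fin m → ℝ := fun k => x (v.succAbove k) with hy
    have hxy : x = v.insertNth (0:ℝ) y := by
      funext i
      refine Fin.succAboveCases v ?_ ?_ i
      · simp [hc2]
      · intro j
        simp [hy]
    have hyy : y ⬝ᵥ y = x ⬝ᵥ x := by
      conv_rhs => rw [hxy]
      rw [dot_ins]
    have hxxpos : 0 < x ⬝ᵥ x := dot_self_pos hx0
    have e1 : α p.castSucc * (x ⬝ᵥ x) ≤ x ⬝ᵥ (lap A *ᵥ x) := by
      rw [hLq x, hLn x, Finset.mul_sum]
      refine Finset.sum_le_sum fun i _ => ?_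
      rcases eq_or_ne (cL i x) 0 with h0 | h0
      · simp [h0]
      · have hip : p.castSucc ≤ i := not_lt.mp (fun hlt => h0 (hc1 i hlt))
        exact mul_le_mul_of_nonneg_right (hαmono hip) (sq_nonneg _)
    have e2 : x ⬝ᵥ (lap A *ᵥ x) ≤ y ⬝ᵥ (lap (deleteVertex A v) *ᵥ y) + y ⬝ᵥ y := by
      conv_lhs => rw [hxy]
      rw [quad_ins]
      have hextra : ∑ j, (if A (v.succAbove j) v ≠ 0 then (1:ℝ) else 0) * (y j)^2 ≤ y ⬝ᵥ y := by
        have : y ⬝ᵥ y = ∑ j, (y j)^2 := by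
          unfold dotProduct
          exact Finset.sum_congr rfl fun j _ => (sq (y j)).symm
        rw [this]
        refine Finset.sum_le_sum fun j _ => ?_
        by_cases h : A (v.succAbove j) v ≠ 0 <;> simp [h, sq_nonneg]
      linarith
    have e3 : y ⬝ᵥ (lap (deleteVertex A v) *ᵥ y) ≤ β p * (y ⬝ᵥ y) := by
      rw [hBq y, hBn y, Finset.mul_sum]
      refine Finset.sum_le_sum fun j _ => ?_
      rcases eq_or_ne (cB j y) 0 with h0 | h0
      · simp [h0]
      · have hjp : j ≤ p := not_lt.mp (fun hlt => h0 (hc3 j hlt))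
        exact mul_le_mul_of_nonneg_right (hβmono hjp) (sq_nonneg _)
    have hfinal : α p.castSucc * (x ⬝ᵥ x) ≤ (β p + 1) * (x ⬝ᵥ x) := by
      rw [add_mul, one_mul]
      rw [hyy] at e3
      linarith
    exact le_of_mul_le_mul_right hfinal hxxpos
  · -- `β p + 1 ≤ α p.succ + 1`
    have hkey : β p ≤ α p.succ := by
      set F : (Fin m → ℝ) →ₗ[ℝ]
          ((↥(Finset.Iio p) → ℝ) × (↥(Finset.Ioi (p.succ : Fin (m+1))) → ℝ)) :=
        LinearMap.prod (LinearMap.pi fun j => cB j.1)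
          (LinearMap.pi fun i => (cL i.1).comp (extLin v)) with hF
      have hdim : Module.finrank ℝ
          ((↥(Finset.Iio p) → ℝ) × (↥(Finset.Ioi (p.succ : Fin (m+1))) → ℝ))
          < Module.finrank ℝ (Fin m → ℝ) := by
        rw [Module.finrank_prod, Module.finrank_pi, Module.finrank_pi, Module.finrank_pi,
          Fintype.card_coe, Fintype.card_coe, Fintype.card_fin, Fin.card_Iio, Fin.card_Ioi,
          Fin.val_succ]
        omega
      obtain ⟨y, hy0, hFy⟩ := exists_ne_zero_ker F hdim
      rw [hF] at hFy
      simp only [LinearMap.prod_apply, Function.prod, Prod.mk_eq_zero] at hFy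
      obtain ⟨h1, h2⟩ := hFy
      have hc1 : ∀ j : Fin m, j < p → cB j y = 0 := by
        intro j hj
        have := congrFun h1 ⟨j, Finset.mem_Iio.mpr hj⟩
        simpa [LinearMap.pi_apply] using this
      have hc2 : ∀ i : Fin (m+1), p.succ < i → cL i (v.insertNth (0:ℝ) y) = 0 := by
        intro i hi
        have := congrFun h2 ⟨i, Finset.mem_Ioi.mpr hi⟩
        simpa [LinearMap.pi_apply, LinearMap.comp_apply, extLin] using this
      set x : Fin (m+1) → ℝ := v.insertNth (0:ℝ) y with hx
      have hyy : y ⬝ᵥ y = x ⬝ᵥ x := by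
        rw [hx, dot_ins]
      have hyypos : 0 < y ⬝ᵥ y := dot_self_pos hy0
      have e1 : β p * (y ⬝ᵥ y) ≤ y ⬝ᵥ (lap (deleteVertex A v) *ᵥ y) := by
        rw [hBq y, hBn y, Finset.mul_sum]
        refine Finset.sum_le_sum fun j _ => ?_
        rcases eq_or_ne (cB j y) 0 with h0 | h0
        · simp [h0]
        · have hjp : p ≤ j := not_lt.mp (fun hlt => h0 (hc1 j hlt))
          exact mul_le_mul_of_nonneg_right (hβmono hjp) (sq_nonneg _)
      have e2 : y ⬝ᵥ (lap (deleteVertex A v) *ᵥ y) ≤ x ⬝ᵥ (lap A *ᵥ x) := by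
        rw [hx, quad_ins]
        have hextra : 0 ≤ ∑ j, (if A (v.succAbove j) v ≠ 0 then (1:ℝ) else 0) * (y j)^2 := by
          refine Finset.sum_nonneg fun j _ => ?_
          by_cases h : A (v.succAbove j) v ≠ 0 <;> simp [h, sq_nonneg]
        linarith
      have e3 : x ⬝ᵥ (lap A *ᵥ x) ≤ α p.succ * (x ⬝ᵥ x) := by
        rw [hLq x, hLn x, Finset.mul_sum]
        refine Finset.sum_le_sum fun i _ => ?_
        rcases eq_or_ne (cL i x) 0 with h0 | h0
        · simp [h0]
        · have hip : i ≤ p.succ := not_lt.mp (fun hlt => h0 (hc2 i hlt))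
          exact mul_le_mul_of_nonneg_right (hαmono hip) (sq_nonneg _)
      have hfinal : β p * (y ⬝ᵥ y) ≤ α p.succ * (y ⬝ᵥ y) := by
        rw [hyy]
        rw [hyy] at e1
        linarith
      exact le_of_mul_le_mul_right hfinal hyypos
    linarith
end

section
/- Let Γ be a signed graph of order m and let Γ' = Γ − e be the signed graph obtained from Γ by deleting one edge e (of either sign). If (α_1, α_2, …, α_m) and (β_1, β_2, …, β_m) are the ordered Laplacian spectra of Γ and Γ' respectively, then β_p ≤ α_p ≤ β_p + 2 for every p = 1, 2, …, m. -/
open Polynomial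
open Matrix

lemma my_charpoly_conj {n : ℕ} (U V A : Matrix (Fin n) (Fin n) ℝ)
    (hUV : U * V = 1) (hVU : V * U = 1) : (U * A * V).charpoly = A.charpoly := by
  have hm : ∀ B B' : Matrix (Fin n) (Fin n) ℝ,
      C.mapMatrix (B * B') = C.mapMatrix B * C.mapMatrix B' := fun B B' => map_mul _ _ _
  have h1 : (U * A * V).charmatrix = C.mapMatrix U * A.charmatrix * C.mapMatrix V := by
    rw [charmatrix, charmatrix, hm, hm]
    have hs : C.mapMatrix U * (Matrix.scalar (Fin n) (X : ℝ[X])) * C.mapMatrix V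
        = Matrix.scalar (Fin n) (X : ℝ[X]) := by
      rw [← (Matrix.scalar_commute (X : ℝ[X]) (Commute.all _) (C.mapMatrix U)).eq, mul_assoc,
        ← hm, hUV]
      simp
    rw [mul_sub, sub_mul, hs]
  have h2 : (C.mapMatrix U).det * (C.mapMatrix V).det = 1 := by
    rw [← det_mul, ← hm, hUV]; simp
  rw [Matrix.charpoly, Matrix.charpoly, h1, det_mul, det_mul]
  calc (C.mapMatrix U).det * A.charmatrix.det * (C.mapMatrix V).det
      = (C.mapMatrix U).det * (C.mapMatrix V).det * A.charmatrix.det := by ring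
    _ = A.charmatrix.det := by rw [h2, one_mul]

lemma my_charpoly_diagonal {n : ℕ} (d : Fin n → ℝ) :
    (Matrix.diagonal d).charpoly = ∏ i, (X - C (d i)) := by
  rw [Matrix.charpoly_of_upperTriangular (Matrix.diagonal d)
    (fun i j hij => Matrix.diagonal_apply_ne d (ne_of_gt hij))]
  simp

lemma my_roots_prod {n : ℕ} (f : Fin n → ℝ) :
    (∏ i, (X - C (f i))).roots = Finset.univ.val.map f := by
  have : (∏ i, (X - C (f i))) = ((Finset.univ.val.map f).map fun a => X - C a).prod := by
    rw [Multiset.map_map, Finset.prod_eq_multiset_prod]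
    rfl
  rw [this, Polynomial.roots_multiset_prod_X_sub_C]

lemma my_perm_of_prod_eq {n : ℕ} {f g : Fin n → ℝ} (hmono : Monotone f)
    (h : (∏ i, (X - C (f i))) = ∏ i, (X - C (g i))) :
    f = g ∘ (Tuple.sort g) := by
  have hms : Finset.univ.val.map f = Finset.univ.val.map g := by
    rw [← my_roots_prod, ← my_roots_prod, h]
  have hl : List.Perm (List.ofFn f) (List.ofFn g) := by
    rw [← Multiset.coe_eq_coe]
    have e : ∀ h : Fin n → ℝ, (↑(List.ofFn h) : Multiset ℝ) = Finset.univ.val.map h := by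
      intro h
      rw [List.ofFn_eq_map, ← Multiset.map_coe]
      congr 1
    rw [e f, e g, hms]
  have hl2 : List.Perm (List.ofFn f) (List.ofFn (g ∘ Tuple.sort g)) :=
    hl.trans (Equiv.Perm.ofFn_comp_perm (Tuple.sort g) g).symm
  have := List.Perm.eq_of_sortedLE hmono.sortedLE_ofFn
    (Tuple.monotone_sort g).sortedLE_ofFn hl2
  exact List.ofFn_injective this
lemma my_star_eq {n : ℕ} (B : Matrix (Fin n) (Fin n) ℝ) : star B = Bᵀ := by
  ext i j
  simp [Matrix.star_eq_conjTranspose, Matrix.conjTranspose_apply]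

lemma my_spec_decomp {n : ℕ} (M : Matrix (Fin n) (Fin n) ℝ) (hM : M.IsHermitian)
    (μ : Fin n → ℝ) (hmono : Monotone μ) (hcp : M.charpoly = ∏ i, (X - C (μ i))) :
    ∃ W : Matrix (Fin n) (Fin n) ℝ,
      W * Wᵀ = 1 ∧ Wᵀ * W = 1 ∧ M = W * Matrix.diagonal μ * Wᵀ := by
  set U : Matrix (Fin n) (Fin n) ℝ := (hM.eigenvectorUnitary : Matrix (Fin n) (Fin n) ℝ) with hU
  have hU1 : U * Uᵀ = 1 := by
    rw [← my_star_eq]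
    exact (Matrix.mem_unitaryGroup_iff).mp hM.eigenvectorUnitary.2
  have hU2 : Uᵀ * U = 1 := by
    rw [← my_star_eq]
    exact (Matrix.mem_unitaryGroup_iff').mp hM.eigenvectorUnitary.2
  set ev : Fin n → ℝ := hM.eigenvalues with hev
  have hspec : M = U * Matrix.diagonal ev * Uᵀ := by
    have := hM.spectral_theorem
    rw [← my_star_eq]
    refine this.trans ?_
    rw [Unitary.conjStarAlgAut_apply, RCLike.ofReal_real_eq_id]
    rfl
  have hcp2 : M.charpoly = ∏ i, (X - C (ev i)) := by
    rw [hspec, my_charpoly_conj U Uᵀ _ hU1 hU2, my_charpoly_diagonal]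
  have hμev : μ = ev ∘ (Tuple.sort ev) := my_perm_of_prod_eq hmono (hcp ▸ hcp2)
  set τ := Tuple.sort ev with hτ
  refine ⟨U.submatrix id τ, ?_, ?_, ?_⟩
  · ext a b
    have : ∀ j, U a j * U b j = (fun j => U a j * U b j) j := fun _ => rfl
    calc (U.submatrix id τ * (U.submatrix id τ)ᵀ) a b
        = ∑ i, U a (τ i) * U b (τ i) := by simp [Matrix.mul_apply]
      _ = ∑ j, U a j * U b j := Equiv.sum_comp τ (fun j => U a j * U b j)
      _ = (U * Uᵀ) a b := by simp [Matrix.mul_apply]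
      _ = (1 : Matrix (Fin n) (Fin n) ℝ) a b := by rw [hU1]
  · ext i j
    have : ((U.submatrix id τ)ᵀ * U.submatrix id τ) i j = (Uᵀ * U) (τ i) (τ j) := by
      simp [Matrix.mul_apply]
    rw [this, hU2]
    by_cases h : i = j
    · subst h; simp
    · rw [Matrix.one_apply_ne (fun hc => h (τ.injective hc)), Matrix.one_apply_ne h]
  · have hq : ∀ (W : Matrix (Fin n) (Fin n) ℝ) (d : Fin n → ℝ) (a b : Fin n),
        (W * Matrix.diagonal d * Wᵀ) a b = ∑ i, W a i * d i * W b i := by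
      intro W d a b
      rw [Matrix.mul_apply]
      simp [Matrix.mul_diagonal]
    ext a b
    calc M a b = (U * Matrix.diagonal ev * Uᵀ) a b := by rw [← hspec]
      _ = ∑ j, U a j * ev j * U b j := hq U ev a b
      _ = ∑ i, U a (τ i) * ev (τ i) * U b (τ i) :=
          (Equiv.sum_comp τ (fun j => U a j * ev j * U b j)).symm
      _ = (U.submatrix id τ * Matrix.diagonal μ * (U.submatrix id τ)ᵀ) a b := by
          rw [hq]
          simp [hμev]
lemma my_quad {n : ℕ} (W : Matrix (Fin n) (Fin n) ℝ) (d : Fin n → ℝ) (x : Fin n → ℝ) :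
    x ⬝ᵥ ((W * Matrix.diagonal d * Wᵀ) *ᵥ x) = ∑ i, d i * ((Wᵀ *ᵥ x) i)^2 := by
  set z := Wᵀ *ᵥ x with hz
  have h1 : (W * Matrix.diagonal d * Wᵀ) *ᵥ x = W *ᵥ (Matrix.diagonal d *ᵥ z) := by
    rw [hz, Matrix.mulVec_mulVec, Matrix.mulVec_mulVec]
  rw [h1, dotProduct_mulVec]
  have h2 : x ᵥ* W = z := by
    rw [hz, ← Matrix.transpose_transpose W, Matrix.vecMul_transpose, Matrix.transpose_transpose]
  rw [h2, dotProduct]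
  apply Finset.sum_congr rfl
  intro i _
  rw [Matrix.mulVec_diagonal]
  ring

lemma my_norm {n : ℕ} (W : Matrix (Fin n) (Fin n) ℝ) (x : Fin n → ℝ) (hW : W * Wᵀ = 1) :
    ∑ i, ((Wᵀ *ᵥ x) i)^2 = x ⬝ᵥ x := by
  set z := Wᵀ *ᵥ x with hz
  have h1 : ∑ i, (z i)^2 = z ⬝ᵥ z := by
    rw [dotProduct]
    exact Finset.sum_congr rfl fun i _ => (sq (z i)) ▸ rfl
  rw [h1, hz, dotProduct_mulVec, ← Matrix.transpose_transpose W,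
    Matrix.vecMul_transpose, Matrix.transpose_transpose, Matrix.mulVec_mulVec, hW,
    Matrix.one_mulVec]

lemma my_weyl {n : ℕ} (M N : Matrix (Fin n) (Fin n) ℝ) (hM : M.IsHermitian) (hN : N.IsHermitian)
    (μ ν : Fin n → ℝ) (hμm : Monotone μ) (hμc : M.charpoly = ∏ i, (X - C (μ i)))
    (hνm : Monotone ν) (hνc : N.charpoly = ∏ i, (X - C (ν i))) (c : ℝ)
    (h : ∀ x : Fin n → ℝ, x ⬝ᵥ (N *ᵥ x) ≤ x ⬝ᵥ (M *ᵥ x) + c * (x ⬝ᵥ x)) (p : Fin n) :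
    ν p ≤ μ p + c := by
  obtain ⟨W, hW1, hW2, hWM⟩ := my_spec_decomp M hM μ hμm hμc
  obtain ⟨V, hV1, hV2, hVN⟩ := my_spec_decomp N hN ν hνm hνc
  set B : Matrix (Fin n) (Fin n) ℝ :=
    Matrix.of (fun i j => if i < p then V j i else if p < i then W j i else 0) with hB
  have hdet : B.det = 0 :=
    Matrix.det_eq_zero_of_row_eq_zero p (fun j => by simp [hB])
  obtain ⟨x, hx0, hBx⟩ := (Matrix.exists_mulVec_eq_zero_iff).mpr hdet
  set zM := Wᵀ *ᵥ x with hzM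
  set zN := Vᵀ *ᵥ x with hzN
  have hrow : ∀ i : Fin n, (B *ᵥ x) i = 0 := fun i => congrFun hBx i
  have hzNlow : ∀ i : Fin n, i < p → zN i = 0 := by
    intro i hi
    have := hrow i
    rw [Matrix.mulVec, dotProduct] at this
    simp only [hB, Matrix.of_apply, hi, if_true] at this
    rw [hzN, Matrix.mulVec, dotProduct]
    simpa [mul_comm] using this
  have hzMhigh : ∀ i : Fin n, p < i → zM i = 0 := by
    intro i hi
    have := hrow i
    rw [Matrix.mulVec, dotProduct] at this
    simp only [hB, Matrix.of_apply, not_lt_of_gt hi, if_false, hi, if_true] at this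
    rw [hzM, Matrix.mulVec, dotProduct]
    simpa [mul_comm] using this
  have hSnn : 0 ≤ x ⬝ᵥ x := Finset.sum_nonneg fun i _ => mul_self_nonneg (x i)
  have hSpos : 0 < x ⬝ᵥ x := by
    rcases hSnn.lt_or_eq with h' | h'
    · exact h'
    · exact absurd ((dotProduct_self_eq_zero).mp h'.symm) hx0
  have hNx : ν p * (x ⬝ᵥ x) ≤ x ⬝ᵥ (N *ᵥ x) := by
    rw [hVN, my_quad, ← my_norm V x hV1, Finset.mul_sum]
    apply Finset.sum_le_sum
    intro i _
    by_cases hi : i < p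
    · have h0 := hzNlow i hi
      rw [hzN] at h0
      rw [h0]; simp
    · exact mul_le_mul_of_nonneg_right (hνm (le_of_not_gt hi)) (sq_nonneg _)
  have hMx : x ⬝ᵥ (M *ᵥ x) ≤ μ p * (x ⬝ᵥ x) := by
    rw [hWM, my_quad, ← my_norm W x hW1, Finset.mul_sum]
    apply Finset.sum_le_sum
    intro i _
    by_cases hi : p < i
    · have h0 := hzMhigh i hi
      rw [hzM] at h0
      rw [h0]; simp
    · exact mul_le_mul_of_nonneg_right (hμm (le_of_not_gt hi)) (sq_nonneg _)
  have key : ν p * (x ⬝ᵥ x) ≤ (μ p + c) * (x ⬝ᵥ x) := by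
    calc ν p * (x ⬝ᵥ x) ≤ x ⬝ᵥ (N *ᵥ x) := hNx
      _ ≤ x ⬝ᵥ (M *ᵥ x) + c * (x ⬝ᵥ x) := h x
      _ ≤ μ p * (x ⬝ᵥ x) + c * (x ⬝ᵥ x) := by linarith
      _ = (μ p + c) * (x ⬝ᵥ x) := by ring
  exact (mul_le_mul_iff_left₀ hSpos).mp key
lemma lap_hermitian {n : ℕ} (A : Matrix (Fin n) (Fin n) ℝ) (hs : A.IsSymm) :
    (lap A).IsHermitian := by
  have h1 : (lap A)ᴴ = (lap A)ᵀ := by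
    ext i j
    simp [Matrix.conjTranspose_apply]
  rw [Matrix.IsHermitian, h1, lap, Matrix.transpose_sub, Matrix.diagonal_transpose, hs.eq]

lemma deleteEdge_symm {n : ℕ} (A : Matrix (Fin n) (Fin n) ℝ) (hs : A.IsSymm) (u v : Fin n) :
    (deleteEdge A u v).IsSymm := by
  ext i j
  simp only [Matrix.transpose_apply, deleteEdge, Matrix.of_apply]
  by_cases h : (i = u ∧ j = v) ∨ (i = v ∧ j = u)
  · rw [if_pos h, if_pos (by tauto)]
  · rw [if_neg h, if_neg (by tauto)]
    exact hs.apply i j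

section app
variable {n : ℕ} (A : Matrix (Fin n) (Fin n) ℝ)

lemma deg_delete_ne (u v i : Fin n) (hiu : i ≠ u) (hiv : i ≠ v) :
    deg (deleteEdge A u v) i = deg A i := by
  unfold deg
  congr 1
  ext j
  simp [deleteEdge, hiu, hiv]

lemma deg_delete_u (u v : Fin n) (huv : u ≠ v) (he : A u v ≠ 0) :
    deg A u = deg (deleteEdge A u v) u + 1 := by
  have hset : {j | A u j ≠ 0} = insert v {j | deleteEdge A u v u j ≠ 0} := by
    ext j
    by_cases hj : j = v
    · subst hj; simp [he]
    · simp [deleteEdge, hj, huv, Ne.symm hj]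
  have hnm : v ∉ {j | deleteEdge A u v u j ≠ 0} := by
    simp [deleteEdge]
  rw [deg, hset, Set.ncard_insert_of_notMem hnm (Set.toFinite _), deg]

lemma deg_delete_v (u v : Fin n) (huv : u ≠ v) (hsym : A.IsSymm) (he : A u v ≠ 0) :
    deg A v = deg (deleteEdge A u v) v + 1 := by
  have hvu : A v u ≠ 0 := by rw [← hsym.apply v u]; exact he
  have hset : {j | A v j ≠ 0} = insert u {j | deleteEdge A u v v j ≠ 0} := by
    ext j
    by_cases hj : j = u
    · subst hj; simp [deleteEdge, hvu]
    · simp [deleteEdge, hj, Ne.symm huv]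
  have hnm : u ∉ {j | deleteEdge A u v v j ≠ 0} := by
    simp [deleteEdge]
  rw [deg, hset, Set.ncard_insert_of_notMem hnm (Set.toFinite _), deg]

end app

section main
variable {n : ℕ} {A : Matrix (Fin n) (Fin n) ℝ}

lemma lap_entry_diff (hA : IsSignedAdj A) (u v : Fin n) (huv : u ≠ v) (he : A u v ≠ 0) :
    ∀ i j, lap A i j = lap (deleteEdge A u v) i j +
      (if i = u then 1 else if i = v then -(A u v) else 0) *
      (if j = u then 1 else if j = v then -(A u v) else 0) := by
  intro i j
  set s := A u v with hsdef
  have hss : s * s = 1 := by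
    rcases hA.2.2 u v with h | h | h
    · rw [← hsdef] at h; rw [h]; norm_num
    · exact absurd (hsdef ▸ h) he
    · rw [← hsdef] at h; rw [h]; norm_num
  have hAd : ∀ a b, ¬((a = u ∧ b = v) ∨ (a = v ∧ b = u)) → deleteEdge A u v a b = A a b := by
    intro a b h
    simp [deleteEdge, h]
  by_cases hij : i = j
  · subst hij
    have hAii : deleteEdge A u v i i = A i i := by
      apply hAd
      rintro (⟨h1, h2⟩ | ⟨h1, h2⟩) <;> exact huv (h1 ▸ h2 ▸ rfl)
    by_cases hiu : i = u
    · rw [hiu] at hAii ⊢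
      simp only [lap, Matrix.sub_apply, Matrix.diagonal_apply_eq, hAii, if_pos rfl]
      rw [deg_delete_u A u v huv he]
      push_cast
      ring
    · by_cases hiv : i = v
      · rw [hiv] at hAii ⊢
        simp only [lap, Matrix.sub_apply, Matrix.diagonal_apply_eq, hAii,
          if_neg (show v ≠ u from Ne.symm huv), if_pos rfl]
        rw [deg_delete_v A u v huv hA.1 he]
        push_cast
        nlinarith [hss]
      · simp only [lap, Matrix.sub_apply, Matrix.diagonal_apply_eq, hAii, if_neg hiu, if_neg hiv]
        rw [deg_delete_ne A u v i hiu hiv]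
        ring
  · have hdiag : ∀ (B : Matrix (Fin n) (Fin n) ℝ) (f : Fin n → ℝ),
        (Matrix.diagonal f - B) i j = - B i j := by
      intro B f
      rw [Matrix.sub_apply, Matrix.diagonal_apply_ne _ hij]
      ring
    rw [lap, lap, hdiag, hdiag]
    by_cases h1 : i = u ∧ j = v
    · obtain ⟨hiu, hjv⟩ := h1
      rw [hiu, hjv]
      have h0 : deleteEdge A u v u v = 0 := by simp [deleteEdge]
      rw [h0, if_pos rfl, if_neg (Ne.symm huv), if_pos rfl]
      ring
    · by_cases h2 : i = v ∧ j = u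
      · obtain ⟨hiv, hju⟩ := h2
        rw [hiv, hju]
        have h0 : deleteEdge A u v v u = 0 := by simp [deleteEdge]
        have hvu : A v u = s := (hA.1.apply v u).symm
        rw [h0, hvu, if_neg (show v ≠ u from Ne.symm huv), if_pos rfl, if_pos rfl]
        ring
      · rw [hAd i j (by tauto)]
        have hw : (if i = u then (1:ℝ) else if i = v then -s else 0) *
            (if j = u then 1 else if j = v then -s else 0) = 0 := by
          by_cases hiu : i = u
          · have hju : j ≠ u := fun h => hij (hiu.trans h.symm)
            have hjv : j ≠ v := fun h => h1 ⟨hiu, h⟩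
            simp [hiu, hju, hjv]
          · by_cases hiv : i = v
            · have hju : j ≠ u := fun h => h2 ⟨hiv, h⟩
              have hjv : j ≠ v := fun h => hij (hiv.trans h.symm)
              simp [hiv, hju, hjv, hiu]
            · simp [hiu, hiv]
        rw [hw]
        ring

end main

section main2
variable {n : ℕ} {A : Matrix (Fin n) (Fin n) ℝ}

lemma lap_quad_diff (hA : IsSignedAdj A) (u v : Fin n) (huv : u ≠ v) (he : A u v ≠ 0)
    (x : Fin n → ℝ) :
    x ⬝ᵥ (lap A *ᵥ x) = x ⬝ᵥ (lap (deleteEdge A u v) *ᵥ x) + (x u - A u v * x v)^2 := by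
  set w : Fin n → ℝ := fun i => if i = u then 1 else if i = v then -(A u v) else 0 with hw
  have hT : ∑ j, w j * x j = x u - A u v * x v := by
    have hsplit : ∀ j, w j * x j =
        (if j = u then x j else 0) + (if j = v then -(A u v) * x j else 0) := by
      intro j
      by_cases hju : j = u
      · have hjv : j ≠ v := fun h => huv (hju ▸ h ▸ rfl)
        simp [hw, hju, hjv, huv]
      · by_cases hjv : j = v
        · simp [hw, hju, hjv, Ne.symm huv]
        · simp [hw, hju, hjv]
    rw [Finset.sum_congr rfl (fun j _ => hsplit j), Finset.sum_add_distrib,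
      Finset.sum_ite_eq' Finset.univ u (fun j => x j),
      Finset.sum_ite_eq' Finset.univ v (fun j => -(A u v) * x j)]
    simp
    ring
  have hmv : ∀ i, (lap A *ᵥ x) i = (lap (deleteEdge A u v) *ᵥ x) i + w i * (∑ j, w j * x j) := by
    intro i
    rw [Matrix.mulVec, Matrix.mulVec, dotProduct, dotProduct, Finset.mul_sum,
      ← Finset.sum_add_distrib]
    apply Finset.sum_congr rfl
    intro j _
    rw [lap_entry_diff hA u v huv he i j]
    simp only [hw]
    ring
  rw [dotProduct, dotProduct, Finset.sum_congr rfl (fun i _ => by rw [hmv i])]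
  rw [show ∀ f g : Fin n → ℝ, ∑ i, x i * (f i + g i) = ∑ i, x i * f i + ∑ i, x i * g i from
    fun f g => by rw [← Finset.sum_add_distrib]; exact Finset.sum_congr rfl fun i _ => by ring]
  congr 1
  have : ∑ i, x i * (w i * (∑ j, w j * x j)) = (∑ i, w i * x i) * (∑ j, w j * x j) := by
    rw [Finset.sum_mul]
    exact Finset.sum_congr rfl fun i _ => by ring
  rw [this, hT]
  ring

end main2

/-- deleting one edge (of either sign),
beta_p <= alpha_p <= beta_p + 2 for p = 1,...,m. -/
theorem stmt2 (m : ℕ) (A : Matrix (Fin m) (Fin m) ℝ) (hA : IsSignedAdj A)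
    (u v : Fin m) (huv : u ≠ v) (he : A u v ≠ 0)
    (α β : Fin m → ℝ)
    (hα : IsOrderedSpectrum (lap A) α)
    (hβ : IsOrderedSpectrum (lap (deleteEdge A u v)) β) :
    ∀ p : Fin m, β p ≤ α p ∧ α p ≤ β p + 2 := by
  have hL : (lap A).IsHermitian := lap_hermitian A hA.1
  have hL' : (lap (deleteEdge A u v)).IsHermitian :=
    lap_hermitian _ (deleteEdge_symm A hA.1 u v)
  have hss : A u v * A u v = 1 := by
    rcases hA.2.2 u v with h | h | h
    · rw [h]; norm_num
    · exact absurd h he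
    · rw [h]; norm_num
  intro p
  constructor
  · have := my_weyl (lap A) (lap (deleteEdge A u v)) hL hL' α β hα.1 hα.2 hβ.1 hβ.2 0
      (fun x => by
        have hq := lap_quad_diff hA u v huv he x
        nlinarith [sq_nonneg (x u - A u v * x v)]) p
    linarith
  · have := my_weyl (lap (deleteEdge A u v)) (lap A) hL' hL β α hβ.1 hβ.2 hα.1 hα.2 2
      (fun x => by
        have hq := lap_quad_diff hA u v huv he x
        have h2 : x u * x u + x v * x v ≤ x ⬝ᵥ x := by
          have hsub := Finset.sum_le_sum_of_subset_of_nonneg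
            (Finset.subset_univ ({u, v} : Finset (Fin m)))
            (fun i _ _ => mul_self_nonneg (x i))
          rw [Finset.sum_pair huv] at hsub
          exact hsub
        nlinarith [hss, sq_nonneg (x u + A u v * x v), h2]) p
    linarith
end

section
/- Let m ≥ 3. Let (C_{m+1}, σ_1) be a signed cycle on vertices v_1, v_2, …, v_{m+1} (with edges v_iv_{i+1} for 1 ≤ i ≤ m and the edge v_1v_{m+1}) with ordered Laplacian spectrum (α_1, α_2, …, α_{m+1}), and let (C_m, σ_2) be the signed cycle on vertices v_1, v_2, …, v_m (with edges v_iv_{i+1} for 1 ≤ i ≤ m−1 and the edge v_1v_m) whose signature satisfies σ_2(e) = σ_1(e) for every edge e of C_m other than v_1v_m, while σ_2(v_1v_m) ∈ {+1, −1} is arbitrary. If (β_1, β_2, …, β_m) is the ordered Laplacian spectrum of (C_m, σ_2), then α_p − 1 ≤ β_p ≤ α_{p+1} + 2 for every p = 1, 2, …, m. -/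
open Polynomial

/-- A signed cycle on `Fin n` (`n >= 3`): vertices `i` and `j` are adjacent iff their
indices are consecutive modulo `n`. -/
def IsSignedCycle {n : ℕ} (A : Matrix (Fin n) (Fin n) ℝ) : Prop :=
  IsSignedAdj A ∧ ∀ i j : Fin n, A i j ≠ 0 ↔ ((i.val + 1) % n = j.val ∨ (j.val + 1) % n = i.val)

section Auxiliary
open Matrix

/-! ### Sum helpers for dot products -/

lemma dotProduct_sum' {n : ℕ} {ι : Type*} (w : Fin n → ℝ) (t : Finset ι) (f : ι → (Fin n → ℝ)) :
    w ⬝ᵥ (∑ i ∈ t, f i) = ∑ i ∈ t, w ⬝ᵥ f i := by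
  simp only [dotProduct, Finset.sum_apply, Finset.mul_sum]
  rw [Finset.sum_comm]

lemma sum_dotProduct' {n : ℕ} {ι : Type*} (w : Fin n → ℝ) (t : Finset ι) (f : ι → (Fin n → ℝ)) :
    (∑ i ∈ t, f i) ⬝ᵥ w = ∑ i ∈ t, f i ⬝ᵥ w := by
  simp only [dotProduct, Finset.sum_apply, Finset.sum_mul]
  rw [Finset.sum_comm]

lemma mulVec_sum' {n k : ℕ} {ι : Type*} (M : Matrix (Fin k) (Fin n) ℝ) (t : Finset ι)
    (f : ι → (Fin n → ℝ)) : M *ᵥ (∑ i ∈ t, f i) = ∑ i ∈ t, M *ᵥ f i := by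
  funext x
  simp only [Matrix.mulVec, dotProduct, Finset.sum_apply, Finset.mul_sum]
  rw [Finset.sum_comm]

/-! ### Ordered spectra yield orthonormal eigenbases -/

lemma charpoly_eq_prod_eigenvalues {n : ℕ} (M : Matrix (Fin n) (Fin n) ℝ)
    (hH : M.IsHermitian) : M.charpoly = ∏ i, (X - C (hH.eigenvalues i)) := by
  classical
  set U : Matrix (Fin n) (Fin n) ℝ := (hH.eigenvectorUnitary : Matrix (Fin n) (Fin n) ℝ) with hU
  set D : Matrix (Fin n) (Fin n) ℝ := Matrix.diagonal (RCLike.ofReal ∘ hH.eigenvalues) with hD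
  have hspec : M = U * D * star U := hH.spectral_theorem
  have hUU : U * star U = 1 := (Matrix.mem_unitaryGroup_iff).mp hH.eigenvectorUnitary.2
  have hcomm : ∀ P : Matrix (Fin n) (Fin n) ℝ[X],
      P * Matrix.scalar (Fin n) (X : ℝ[X]) = (Matrix.scalar (Fin n) (X : ℝ[X])) * P := by
    intro P
    ext i j
    rw [Matrix.scalar_apply, Matrix.mul_diagonal, Matrix.diagonal_mul, mul_comm]
  have hchar : charmatrix M = U.map (C : ℝ →+* ℝ[X]) * charmatrix D * (star U).map C := by
    rw [charmatrix, charmatrix]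
    simp only [RingHom.mapMatrix_apply]
    rw [mul_sub, sub_mul, mul_assoc, ← hcomm ((star U).map C), ← mul_assoc,
      ← Matrix.map_mul, hUU]
    congr 1
    · simp
    · rw [← Matrix.map_mul, ← Matrix.map_mul, ← hspec]
  have hdetU : (U.map (C : ℝ →+* ℝ[X])).det * ((star U).map (C : ℝ →+* ℝ[X])).det = 1 := by
    rw [← Matrix.det_mul, ← Matrix.map_mul, hUU]; simp
  have hcharD : (charmatrix D).det = ∏ i, (X - C (hH.eigenvalues i)) := by
    have hDc : charmatrix D = Matrix.diagonal (fun i => X - C (hH.eigenvalues i)) := by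
      ext i j
      by_cases h : i = j
      · subst h; simp [hD]
      · simp [charmatrix_apply_ne _ _ _ h, hD, Matrix.diagonal_apply_ne _ h]
    rw [hDc, Matrix.det_diagonal]
  rw [Matrix.charpoly, hchar, Matrix.det_mul, Matrix.det_mul, hcharD]
  rw [mul_comm ((U.map (C : ℝ →+* ℝ[X])).det) _, mul_assoc, hdetU, mul_one]

lemma monotone_eq_of_prod_eq {n : ℕ} {f g : Fin n → ℝ} (hf : Monotone f) (hg : Monotone g)
    (h : ∏ i, (X - C (f i)) = ∏ i, (X - C (g i))) : f = g := by
  have hroots : ∀ h : Fin n → ℝ,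
      (∏ i, (X - C (h i))).roots = Multiset.map h Finset.univ.val := by
    intro h
    have : ∏ i, (X - C (h i)) = ((Multiset.map h Finset.univ.val).map fun a => X - C a).prod := by
      rw [Multiset.map_map]
      rfl
    rw [this, Polynomial.roots_multiset_prod_X_sub_C]
  have hms : Multiset.map f Finset.univ.val = Multiset.map g Finset.univ.val := by
    rw [← hroots f, ← hroots g, h]
  rw [Fin.univ_val_map, Fin.univ_val_map] at hms
  exact List.ofFn_injective <| List.Perm.eq_of_sortedLE hf.sortedLE_ofFn hg.sortedLE_ofFn
    (Multiset.coe_eq_coe.mp hms)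

lemma exists_eigenbasis {n : ℕ} (M : Matrix (Fin n) (Fin n) ℝ) (hs : M.IsSymm)
    {μ : Fin n → ℝ} (h : IsOrderedSpectrum M μ) :
    ∃ v : Fin n → (Fin n → ℝ),
      (∀ i j, v i ⬝ᵥ v j = if i = j then (1:ℝ) else 0) ∧ ∀ i, M *ᵥ v i = μ i • v i := by
  classical
  have hH : M.IsHermitian := by
    rw [Matrix.IsHermitian]; ext i j; simpa using congrFun (congrFun hs i) j
  set σ := Tuple.sort hH.eigenvalues with hσ
  have hmono : Monotone (hH.eigenvalues ∘ σ) := Tuple.monotone_sort _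
  have hprod : ∏ i, (X - C (μ i)) = ∏ i, (X - C ((hH.eigenvalues ∘ σ) i)) := by
    rw [← h.2, charpoly_eq_prod_eigenvalues M hH]
    exact (Equiv.prod_comp σ fun i => X - C (hH.eigenvalues i)).symm
  have hμ : μ = hH.eigenvalues ∘ σ := monotone_eq_of_prod_eq h.1 hmono hprod
  refine ⟨fun i => ⇑(hH.eigenvectorBasis (σ i)), fun i j => ?_, fun i => ?_⟩
  · have horth := hH.eigenvectorBasis.orthonormal
    rw [orthonormal_iff_ite] at horth
    have := horth (σ i) (σ j)
    rw [PiLp.inner_apply] at this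
    simp only [RCLike.inner_apply, starRingEnd_apply, star_trivial] at this
    have h2 : (if σ i = σ j then (1:ℝ) else 0) = if i = j then 1 else 0 := by
      simp [σ.injective.eq_iff]
    rw [← h2]
    rw [← this]; exact Finset.sum_congr rfl fun x _ => mul_comm _ _
  · rw [hH.mulVec_eigenvectorBasis, hμ]; rfl

/-! ### Rayleigh bounds -/

section Rayleigh
variable {n : ℕ} {M : Matrix (Fin n) (Fin n) ℝ} {v : Fin n → (Fin n → ℝ)} {μ : Fin n → ℝ}

lemma dot_comb (hor : ∀ i j, v i ⬝ᵥ v j = if i = j then (1:ℝ) else 0)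
    (c : Fin n → ℝ) (j : Fin n) : v j ⬝ᵥ (∑ i, c i • v i) = c j := by
  rw [dotProduct_sum' _ _ _]
  simp only [dotProduct_smul, hor, smul_eq_mul, mul_ite, mul_one, mul_zero]
  simp

lemma comb_dot_comb (hor : ∀ i j, v i ⬝ᵥ v j = if i = j then (1:ℝ) else 0)
    (c : Fin n → ℝ) : (∑ i, c i • v i) ⬝ᵥ (∑ i, c i • v i) = ∑ i, c i ^ 2 := by
  rw [sum_dotProduct' _ _ _]
  simp only [smul_dotProduct, smul_eq_mul, dot_comb hor]
  exact Finset.sum_congr rfl fun i _ => (sq (c i)).symm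

lemma comb_dot_mulVec (hor : ∀ i j, v i ⬝ᵥ v j = if i = j then (1:ℝ) else 0)
    (hev : ∀ i, M *ᵥ v i = μ i • v i) (c : Fin n → ℝ) :
    (∑ i, c i • v i) ⬝ᵥ (M *ᵥ ∑ i, c i • v i) = ∑ i, μ i * c i ^ 2 := by
  have hMx : M *ᵥ (∑ i, c i • v i) = ∑ i, (μ i * c i) • v i := by
    rw [mulVec_sum' _ _ _]
    refine Finset.sum_congr rfl fun i _ => ?_
    rw [Matrix.mulVec_smul, hev i, smul_smul, mul_comm]
  rw [hMx, sum_dotProduct' _ _ _]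
  simp only [smul_dotProduct, smul_eq_mul, dot_comb hor]
  exact Finset.sum_congr rfl fun i _ => by ring

lemma rayleigh_upper (hor : ∀ i j, v i ⬝ᵥ v j = if i = j then (1:ℝ) else 0)
    (hev : ∀ i, M *ᵥ v i = μ i • v i) (hmono : Monotone μ) (p : Fin n)
    (c : Fin n → ℝ) (hc : ∀ i, ¬ i ≤ p → c i = 0) :
    (∑ i, c i • v i) ⬝ᵥ (M *ᵥ ∑ i, c i • v i) ≤ μ p * ((∑ i, c i • v i) ⬝ᵥ (∑ i, c i • v i)) := by
  rw [comb_dot_mulVec hor hev, comb_dot_comb hor, Finset.mul_sum]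
  refine Finset.sum_le_sum fun i _ => ?_
  by_cases h : i ≤ p
  · exact mul_le_mul_of_nonneg_right (hmono h) (sq_nonneg _)
  · simp [hc i h]

lemma rayleigh_lower (hor : ∀ i j, v i ⬝ᵥ v j = if i = j then (1:ℝ) else 0)
    (hev : ∀ i, M *ᵥ v i = μ i • v i) (hmono : Monotone μ) (p : Fin n)
    (c : Fin n → ℝ) (hc : ∀ i, ¬ p ≤ i → c i = 0) :
    μ p * ((∑ i, c i • v i) ⬝ᵥ (∑ i, c i • v i)) ≤
      (∑ i, c i • v i) ⬝ᵥ (M *ᵥ ∑ i, c i • v i) := by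
  rw [comb_dot_mulVec hor hev, comb_dot_comb hor, Finset.mul_sum]
  refine Finset.sum_le_sum fun i _ => ?_
  by_cases h : p ≤ i
  · exact mul_le_mul_of_nonneg_right (hmono h) (sq_nonneg _)
  · simp [hc i h]

noncomputable def combMap (v : Fin n → (Fin n → ℝ)) (s : Finset (Fin n)) :
    (↥s → ℝ) →ₗ[ℝ] (Fin n → ℝ) where
  toFun c := ∑ i : ↥s, c i • v i
  map_add' c d := by simp [add_smul, Finset.sum_add_distrib]
  map_smul' r c := by simp [smul_smul, Finset.smul_sum]

lemma combMap_inj (hor : ∀ i j, v i ⬝ᵥ v j = if i = j then (1:ℝ) else 0) (s : Finset (Fin n)) :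
    Function.Injective (combMap v s) := by
  rw [injective_iff_map_eq_zero]
  intro c hc
  funext j
  have h1 : (v (j:Fin n)) ⬝ᵥ (combMap v s c) = c j := by
    show (v (j:Fin n)) ⬝ᵥ (∑ i : ↥s, c i • v i) = c j
    rw [dotProduct_sum' _ _ _]
    simp only [dotProduct_smul, hor, smul_eq_mul, mul_ite, mul_one, mul_zero]
    simp only [Subtype.coe_inj]
    rw [Finset.sum_ite_eq]
    simp
  rw [hc] at h1
  simpa using h1.symm

lemma finrank_range_combMap (hor : ∀ i j, v i ⬝ᵥ v j = if i = j then (1:ℝ) else 0)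
    (s : Finset (Fin n)) :
    Module.finrank ℝ (LinearMap.range (combMap v s)) = s.card := by
  rw [LinearMap.finrank_range_of_inj (combMap_inj hor s), Module.finrank_fintype_fun_eq_card,
    Fintype.card_coe]

lemma combMap_eq_full_sum (v : Fin n → (Fin n → ℝ)) (s : Finset (Fin n)) (c : ↥s → ℝ) :
    combMap v s c = ∑ i, (fun i => if h : i ∈ s then c ⟨i, h⟩ else 0) i • v i := by
  show ∑ i : ↥s, c i • v i = _
  rw [← Finset.sum_subset (Finset.subset_univ s)
    (fun x _ hx => by simp [dif_neg hx])]
  rw [← Finset.sum_attach s (fun i => (if h : i ∈ s then c ⟨i, h⟩ else 0) • v i)]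
  rw [Finset.univ_eq_attach]
  refine Finset.sum_congr rfl fun i _ => ?_
  simp [dif_pos i.2]
end Rayleigh

lemma exists_nonzero_mem_inf {k : ℕ} (S T : Submodule ℝ (Fin k → ℝ))
    (h : k < Module.finrank ℝ S + Module.finrank ℝ T) :
    ∃ y, y ∈ S ∧ y ∈ T ∧ y ≠ 0 := by
  have h1 := Submodule.finrank_sup_add_finrank_inf_eq S T
  have h2 : Module.finrank ℝ ↥(S ⊔ T) ≤ k := by
    have := Submodule.finrank_le (S ⊔ T)
    rwa [Module.finrank_fintype_fun_eq_card, Fintype.card_fin] at this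
  have h3 : 0 < Module.finrank ℝ ↥(S ⊓ T) := by omega
  have hbot : S ⊓ T ≠ ⊥ := by
    intro hb
    rw [hb] at h3
    simp at h3
  obtain ⟨y, hy, hy0⟩ := Submodule.exists_mem_ne_zero_of_ne_bot hbot
  exact ⟨y, (Submodule.mem_inf.mp hy).1, (Submodule.mem_inf.mp hy).2, hy0⟩

/-! ### The lifting map -/

noncomputable def liftMap (m : ℕ) : (Fin m → ℝ) →ₗ[ℝ] (Fin (m+1) → ℝ) where
  toFun x := Fin.snoc x 0
  map_add' x y := by
    funext j
    refine Fin.lastCases ?_ (fun i => ?_) j <;> simp [Fin.snoc_last, Fin.snoc_castSucc]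
  map_smul' r x := by
    funext j
    refine Fin.lastCases ?_ (fun i => ?_) j <;> simp [Fin.snoc_last, Fin.snoc_castSucc]

lemma liftMap_inj {m : ℕ} : Function.Injective (liftMap m) := by
  intro x y h
  funext i
  have := congrFun h i.castSucc
  simpa [liftMap, Fin.snoc_castSucc] using this

lemma liftMap_dot {m : ℕ} (x y : Fin m → ℝ) :
    (liftMap m x) ⬝ᵥ (liftMap m y) = x ⬝ᵥ y := by
  show (Fin.snoc x 0 : Fin (m+1) → ℝ) ⬝ᵥ (Fin.snoc y 0) = x ⬝ᵥ y
  rw [dotProduct, Fin.sum_univ_castSucc]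
  simp [Fin.snoc_castSucc, Fin.snoc_last, dotProduct]

lemma liftMap_quad {m : ℕ} (L : Matrix (Fin (m+1)) (Fin (m+1)) ℝ) (x : Fin m → ℝ) :
    (liftMap m x) ⬝ᵥ (L *ᵥ liftMap m x) =
      x ⬝ᵥ ((L.submatrix Fin.castSucc Fin.castSucc) *ᵥ x) := by
  show (Fin.snoc x 0 : Fin (m+1) → ℝ) ⬝ᵥ (L *ᵥ (Fin.snoc x 0)) = _
  have hmv : ∀ i : Fin (m+1), (L *ᵥ (Fin.snoc x 0 : Fin (m+1) → ℝ)) i =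
      ∑ j : Fin m, L i j.castSucc * x j := by
    intro i
    rw [Matrix.mulVec, dotProduct, Fin.sum_univ_castSucc]
    simp [Fin.snoc_castSucc, Fin.snoc_last]
  rw [dotProduct, Fin.sum_univ_castSucc]
  simp only [Fin.snoc_castSucc, Fin.snoc_last, zero_mul, add_zero, hmv]
  rw [dotProduct]
  refine Finset.sum_congr rfl fun i _ => ?_
  rw [Matrix.mulVec, dotProduct]
  simp [Matrix.submatrix_apply]

/-- A common vector in the lifted `B`-span and the `A`-span. -/
lemma exists_common_vector {m : ℕ} (u : Fin (m+1) → (Fin (m+1) → ℝ)) (w : Fin m → (Fin m → ℝ))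
    (horu : ∀ i j, u i ⬝ᵥ u j = if i = j then (1:ℝ) else 0)
    (horw : ∀ i j, w i ⬝ᵥ w j = if i = j then (1:ℝ) else 0)
    (sB : Finset (Fin m)) (sA : Finset (Fin (m+1)))
    (hcard : m + 1 < sB.card + sA.card) :
    ∃ (x : Fin m → ℝ) (cB : Fin m → ℝ) (cA : Fin (m+1) → ℝ),
      x ≠ 0 ∧ x = ∑ i, cB i • w i ∧ (∀ i ∉ sB, cB i = 0) ∧
      liftMap m x = ∑ i, cA i • u i ∧ (∀ i ∉ sA, cA i = 0) := by
  classical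
  set S : Submodule ℝ (Fin (m+1) → ℝ) := LinearMap.range ((liftMap m).comp (combMap w sB))
  set T : Submodule ℝ (Fin (m+1) → ℝ) := LinearMap.range (combMap u sA)
  have hrS : Module.finrank ℝ S = sB.card := by
    rw [LinearMap.finrank_range_of_inj, Module.finrank_fintype_fun_eq_card, Fintype.card_coe]
    rw [LinearMap.coe_comp]
    exact liftMap_inj.comp (combMap_inj horw sB)
  have hrT : Module.finrank ℝ T = sA.card := finrank_range_combMap horu sA
  obtain ⟨y, hyS, hyT, hy0⟩ := exists_nonzero_mem_inf S T (by rw [hrS, hrT]; exact hcard)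
  obtain ⟨d, hd⟩ := hyS
  obtain ⟨c, hc⟩ := hyT
  rw [LinearMap.comp_apply] at hd
  refine ⟨combMap w sB d, fun i => if h : i ∈ sB then d ⟨i, h⟩ else 0,
    fun i => if h : i ∈ sA then c ⟨i, h⟩ else 0, ?_, ?_, ?_, ?_, ?_⟩
  · intro h0
    apply hy0
    rw [← hd, h0, map_zero]
  · exact combMap_eq_full_sum w sB d
  · intro i hi; simp [dif_neg hi]
  · rw [hd, ← hc]
    exact combMap_eq_full_sum u sA c
  · intro i hi; simp [dif_neg hi]

/-! ### Signed cycles : degrees and the Laplacian -/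

lemma mod_pred_eq (n i : ℕ) (hn : 3 ≤ n) (hi : i < n) :
    (i + (n-1)) % n = if i = 0 then n-1 else i-1 := by
  split
  · rename_i h; subst h
    rw [Nat.zero_add]
    exact Nat.mod_eq_of_lt (by omega)
  · rw [show i + (n-1) = (i-1) + n by omega, Nat.add_mod_right]
    exact Nat.mod_eq_of_lt (by omega)

lemma mod_succ_eq (n j : ℕ) (hj : j < n) :
    (j + 1) % n = if j + 1 = n then 0 else j + 1 := by
  split
  · rename_i h; rw [h, Nat.mod_self]
  · exact Nat.mod_eq_of_lt (by omega)

lemma mod_inv_iff (n i j : ℕ) (hn : 3 ≤ n) (hi : i < n) (hj : j < n) :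
    ((j + 1) % n = i) ↔ j = (i + (n-1)) % n := by
  rw [mod_pred_eq n i hn hi, mod_succ_eq n j hj]
  split <;> split <;> omega

lemma mod_succ_cases (n j : ℕ) (hj : j < n) :
    (j+1) % n = j + 1 ∧ j + 1 < n ∨ ((j+1) % n = 0 ∧ j + 1 = n) := by
  rcases Nat.lt_or_ge (j+1) n with h|h
  · exact Or.inl ⟨Nat.mod_eq_of_lt h, h⟩
  · have : j + 1 = n := by omega
    exact Or.inr ⟨by rw [this, Nat.mod_self], this⟩

lemma deg_cycle {n : ℕ} (hn : 3 ≤ n) {A : Matrix (Fin n) (Fin n) ℝ}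
    (hA : IsSignedCycle A) (i : Fin n) : deg A i = 2 := by
  have hn0 : 0 < n := by omega
  set a : Fin n := ⟨(i.val + 1) % n, Nat.mod_lt _ hn0⟩ with ha
  set b : Fin n := ⟨(i.val + (n-1)) % n, Nat.mod_lt _ hn0⟩ with hb
  have hab : a ≠ b := by
    rw [Fin.ne_iff_vne]
    show (i.val + 1) % n ≠ (i.val + (n-1)) % n
    rw [mod_pred_eq n i.val hn i.isLt, mod_succ_eq n i.val i.isLt]
    split <;> split <;> omega
  have hset : {j | A i j ≠ 0} = {a, b} := by
    ext j
    rw [Set.mem_setOf_eq, hA.2 i j]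
    constructor
    · rintro (h | h)
      · left; exact Fin.ext h.symm
      · right; exact Fin.ext ((mod_inv_iff n i.val j.val hn i.isLt j.isLt).mp h)
    · rintro (h | h)
      · left; rw [h]
      · right; exact (mod_inv_iff n i.val j.val hn i.isLt j.isLt).mpr (by rw [h])
  rw [deg, hset, Set.ncard_pair hab]

lemma lap_apply_cycle {n : ℕ} (hn : 3 ≤ n) {A : Matrix (Fin n) (Fin n) ℝ}
    (hA : IsSignedCycle A) (i j : Fin n) :
    lap A i j = (if i = j then 2 else 0) - A i j := by
  rw [lap, Matrix.sub_apply, Matrix.diagonal_apply]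
  congr 1
  split
  · rename_i h; rw [deg_cycle hn hA]; norm_num
  · rfl

lemma lap_isSymm {n : ℕ} {A : Matrix (Fin n) (Fin n) ℝ} (hA : A.IsSymm) :
    (lap A).IsSymm := by
  rw [lap, Matrix.IsSymm, Matrix.transpose_sub]
  rw [Matrix.IsSymm] at hA
  rw [hA]
  congr 1
  exact Matrix.isSymm_diagonal _
end Auxiliary

open Matrix

section Split
variable (m : ℕ) (hm : 3 ≤ m)
    (A : Matrix (Fin (m+1)) (Fin (m+1)) ℝ) (hA : IsSignedCycle A)
    (B : Matrix (Fin m) (Fin m) ℝ) (hB : IsSignedCycle B)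
    (hagree : ∀ i j : Fin m, (j.val = i.val + 1 ∨ i.val = j.val + 1) →
      B i j = A i.castSucc j.castSucc)

include hm hA hB hagree in
lemma quad_close : ∀ x : Fin m → ℝ,
    |x ⬝ᵥ (((lap A).submatrix Fin.castSucc Fin.castSucc) *ᵥ x) - x ⬝ᵥ (lap B *ᵥ x)|
      ≤ x ⬝ᵥ x := by
  have hm0 : 0 < m := by omega
  set v0 : Fin m := ⟨0, hm0⟩ with hv0
  set vm : Fin m := ⟨m-1, by omega⟩ with hvm
  have hv0m : v0 ≠ vm := by rw [Fin.ne_iff_vne]; show 0 ≠ m-1; omega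
  set s : ℝ := B v0 vm with hs
  have hBsymm : ∀ i j : Fin m, B j i = B i j := fun i j => congrFun (congrFun hB.1.1 i) j
  have hsval : s = 1 ∨ s = -1 := by
    have hadj : B v0 vm ≠ 0 := by
      rw [hB.2]
      right
      show (↑vm + 1) % m = ↑v0
      have : (vm.val + 1) = m := by show m - 1 + 1 = m; omega
      rw [this, Nat.mod_self]
    rcases hB.1.2.2 v0 vm with h|h|h
    · right; rw [hs, h]
    · exact absurd h hadj
    · left; rw [hs, h]
  -- the entrywise difference
  have hE : ∀ i j : Fin m, (lap A).submatrix Fin.castSucc Fin.castSucc i j - lap B i j =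
      (if i = v0 ∧ j = vm then s else 0) + (if i = vm ∧ j = v0 then s else 0) := by
    intro i j
    rw [Matrix.submatrix_apply, lap_apply_cycle (by omega) hA, lap_apply_cycle hm hB]
    simp only [Fin.castSucc_inj]
    have key : B i j = A i.castSucc j.castSucc +
        ((if i = v0 ∧ j = vm then s else 0) + (if i = vm ∧ j = v0 then s else 0)) := by
      have hiv : i.castSucc.val = i.val := rfl
      have hjv : j.castSucc.val = j.val := rfl
      by_cases hw : (i = v0 ∧ j = vm) ∨ (i = vm ∧ j = v0)
      · -- wrap pair : A entry is zero
        have hA0 : A i.castSucc j.castSucc = 0 := by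
          by_contra hAn
          have hAn2 := (hA.2 i.castSucc j.castSucc).mp hAn
          simp only [Fin.coe_castSucc] at hAn2
          have hv0v : v0.val = 0 := rfl
          have hvmv : vm.val = m - 1 := rfl
          rcases mod_succ_cases (m+1) i.val (by omega) with ⟨h1,h2⟩|⟨h1,h2⟩ <;>
            rcases mod_succ_cases (m+1) j.val (by omega) with ⟨h3,h4⟩|⟨h3,h4⟩ <;>
            rcases hw with ⟨hi', hj'⟩|⟨hi', hj'⟩ <;>
            · have hiv2 := congrArg Fin.val hi'
              have hjv2 := congrArg Fin.val hj'
              omega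
        rcases hw with ⟨hi', hj'⟩|⟨hi', hj'⟩
        · rw [hA0, hi', hj', if_pos ⟨rfl, rfl⟩, if_neg (by
            rintro ⟨h1, h2⟩; exact hv0m (h1 ▸ h2 ▸ rfl))]
          simp [hs]
        · rw [hA0, hi', hj', if_neg (by
            rintro ⟨h1, h2⟩; exact hv0m (h2 ▸ h1 ▸ rfl)), if_pos ⟨rfl, rfl⟩]
          simp [hs, hBsymm v0 vm]
      · -- not the wrap pair
        rw [if_neg (fun h => hw (Or.inl h)), if_neg (fun h => hw (Or.inr h))]
        by_cases hadj : (i.val + 1) % m = j.val ∨ (j.val + 1) % m = i.val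
        · -- adjacent in B, no wraparound possible
          have hsucc : j.val = i.val + 1 ∨ i.val = j.val + 1 := by
            have hnw : ¬(i.val = 0 ∧ j.val = m - 1) ∧
                ¬(i.val = m - 1 ∧ j.val = 0) := by
              constructor
              · rintro ⟨h1, h2⟩
                exact hw (Or.inl ⟨Fin.ext h1, Fin.ext h2⟩)
              · rintro ⟨h1, h2⟩
                exact hw (Or.inr ⟨Fin.ext h1, Fin.ext h2⟩)
            rcases mod_succ_cases m i.val i.isLt with ⟨h1,h2⟩|⟨h1,h2⟩ <;>
              rcases mod_succ_cases m j.val j.isLt with ⟨h3,h4⟩|⟨h3,h4⟩ <;> omega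
          rw [add_zero, add_zero]
          exact hagree i j hsucc
        · -- non adjacent : both entries vanish
          have hB0 : B i j = 0 := by
            by_contra hBn
            exact hadj ((hB.2 i j).mp hBn)
          have hA0 : A i.castSucc j.castSucc = 0 := by
            by_contra hAn
            have hAn2 := (hA.2 i.castSucc j.castSucc).mp hAn
            simp only [Fin.coe_castSucc] at hAn2
            rcases mod_succ_cases (m+1) i.val (by omega) with ⟨h1,h2⟩|⟨h1,h2⟩ <;>
              rcases mod_succ_cases (m+1) j.val (by omega) with ⟨h3,h4⟩|⟨h3,h4⟩ <;>
              rcases mod_succ_cases m i.val i.isLt with ⟨h5,h6⟩|⟨h5,h6⟩ <;>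
              rcases mod_succ_cases m j.val j.isLt with ⟨h7,h8⟩|⟨h7,h8⟩ <;> omega
          rw [hB0, hA0]; ring
    rw [key]; ring
  intro x
  -- difference of quadratic forms
  have hdiff : x ⬝ᵥ (((lap A).submatrix Fin.castSucc Fin.castSucc) *ᵥ x) - x ⬝ᵥ (lap B *ᵥ x)
      = 2 * s * (x v0 * x vm) := by
    rw [← dotProduct_sub, ← Matrix.sub_mulVec]
    have hEm : (lap A).submatrix Fin.castSucc Fin.castSucc - lap B =
        Matrix.of fun i j =>
          (if i = v0 ∧ j = vm then s else 0) + (if i = vm ∧ j = v0 then s else 0) := by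
      ext i j
      rw [Matrix.sub_apply, hE i j]
      rfl
    rw [hEm]
    have hmv : ∀ i : Fin m, ((Matrix.of fun i j =>
        (if i = v0 ∧ j = vm then s else 0) + (if i = vm ∧ j = v0 then s else 0)) *ᵥ x) i =
        (if i = v0 then s * x vm else 0) + (if i = vm then s * x v0 else 0) := by
      intro i
      simp only [Matrix.mulVec, dotProduct, Matrix.of_apply, add_mul,
        Finset.sum_add_distrib, ite_and]
      congr 1
      · by_cases h : i = v0 <;> simp [h, ite_mul]
      · by_cases h : i = vm <;> simp [h, ite_mul]
    have h3 : x ⬝ᵥ ((Matrix.of fun i j =>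
        (if i = v0 ∧ j = vm then s else 0) + (if i = vm ∧ j = v0 then s else 0)) *ᵥ x) =
        ∑ i, x i * ((if i = v0 then s * x vm else 0) + (if i = vm then s * x v0 else 0)) :=
      Finset.sum_congr rfl fun i _ => by rw [hmv i]
    rw [h3]
    simp only [mul_add, mul_ite, mul_zero, Finset.sum_add_distrib,
      Finset.sum_ite_eq' Finset.univ]
    simp
    ring
  rw [hdiff]
  have hxx : x ⬝ᵥ x = ∑ i, x i ^ 2 := by
    rw [dotProduct]
    exact Finset.sum_congr rfl fun i _ => (sq (x i)).symm
  have hpair : x v0 ^ 2 + x vm ^ 2 ≤ x ⬝ᵥ x := by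
    have h4 : (∑ i ∈ ({v0, vm} : Finset (Fin m)), x i ^ 2) ≤ ∑ i, x i ^ 2 :=
      Finset.sum_le_sum_of_subset_of_nonneg (Finset.subset_univ _) (fun i _ _ => sq_nonneg _)
    rw [Finset.sum_pair hv0m] at h4
    rw [hxx]
    exact h4
  have habs : |2 * s * (x v0 * x vm)| ≤ x v0 ^ 2 + x vm ^ 2 := by
    rcases hsval with h|h <;> rw [h] <;> rw [abs_le] <;> constructor <;> nlinarith [sq_nonneg (x v0 + x vm), sq_nonneg (x v0 - x vm)]
  exact habs.trans hpair
end Split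

/-- signed cycles (C_{m+1},sigma1) on v_1,...,v_{m+1} and (C_m,sigma2) on
v_1,...,v_m, with sigma2 agreeing with sigma1 on every edge of C_m except possibly
v_1 v_m (whose sign is arbitrary); then alpha_p - 1 <= beta_p <= alpha_{p+1} + 2. -/
theorem stmt3 (m : ℕ) (hm : 3 ≤ m)
    (A : Matrix (Fin (m+1)) (Fin (m+1)) ℝ) (hA : IsSignedCycle A)
    (B : Matrix (Fin m) (Fin m) ℝ) (hB : IsSignedCycle B)
    (hagree : ∀ i j : Fin m, (j.val = i.val + 1 ∨ i.val = j.val + 1) →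
      B i j = A i.castSucc j.castSucc)
    (α : Fin (m+1) → ℝ) (β : Fin m → ℝ)
    (hα : IsOrderedSpectrum (lap A) α) (hβ : IsOrderedSpectrum (lap B) β) :
    ∀ p : Fin m, α p.castSucc - 1 ≤ β p ∧ β p ≤ α p.succ + 2 := by
  intro p
  have hLs : (lap A).IsSymm := lap_isSymm hA.1.1
  have hLBs : (lap B).IsSymm := lap_isSymm hB.1.1
  obtain ⟨u, horu, hevu⟩ := exists_eigenbasis (lap A) hLs hα
  obtain ⟨w, horw, hevw⟩ := exists_eigenbasis (lap B) hLBs hβ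
  have hclose := quad_close m hm A hA B hB hagree
  have hmonoα := hα.1
  have hmonoβ := hβ.1
  constructor
  · -- lower bound : α_p - 1 ≤ β_p
    obtain ⟨x, cB, cA, hx0, hxw, hcBs, hxu, hcAs⟩ :=
      exists_common_vector u w horu horw (Finset.Iic p) (Finset.Ici p.castSucc) (by
        rw [Fin.card_Iic, Fin.card_Ici]
        have hpm := p.isLt
        simp only [Fin.coe_castSucc]
        omega)
    have ht : 0 < x ⬝ᵥ x := by
      have h2 : (0:ℝ) ≤ x ⬝ᵥ x := Finset.sum_nonneg fun i _ => mul_self_nonneg _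
      rcases h2.eq_or_lt with h'|h'
      · exact absurd (dotProduct_self_eq_zero.mp h'.symm) hx0
      · exact h'
    have h1 : α p.castSucc * ((liftMap m x) ⬝ᵥ (liftMap m x)) ≤
        (liftMap m x) ⬝ᵥ (lap A *ᵥ (liftMap m x)) := by
      rw [hxu]
      exact rayleigh_lower horu hevu hmonoα p.castSucc cA
        (fun i hi => hcAs i (by simpa [Finset.mem_Ici] using hi))
    have h2 : x ⬝ᵥ (lap B *ᵥ x) ≤ β p * (x ⬝ᵥ x) := by
      rw [hxw]
      exact rayleigh_upper horw hevw hmonoβ p cB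
        (fun i hi => hcBs i (by simpa [Finset.mem_Iic] using hi))
    have h3 := liftMap_dot x x
    have h4 := liftMap_quad (lap A) x
    have h5 := hclose x
    rw [h3, h4] at h1
    rw [abs_le] at h5
    have hineq : α p.castSucc * (x ⬝ᵥ x) ≤ (β p + 1) * (x ⬝ᵥ x) := by
      have h5b := h5.2
      nlinarith [h1, h2, h5b]
    have := le_of_mul_le_mul_right hineq ht
    linarith
  · -- upper bound : β_p ≤ α_{p+1} + 2
    obtain ⟨x, cB, cA, hx0, hxw, hcBs, hxu, hcAs⟩ :=
      exists_common_vector u w horu horw (Finset.Ici p) (Finset.Iic p.succ) (by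
        rw [Fin.card_Ici, Fin.card_Iic]
        have hpm := p.isLt
        simp only [Fin.val_succ]
        omega)
    have ht : 0 < x ⬝ᵥ x := by
      have h2 : (0:ℝ) ≤ x ⬝ᵥ x := Finset.sum_nonneg fun i _ => mul_self_nonneg _
      rcases h2.eq_or_lt with h'|h'
      · exact absurd (dotProduct_self_eq_zero.mp h'.symm) hx0
      · exact h'
    have h1 : β p * (x ⬝ᵥ x) ≤ x ⬝ᵥ (lap B *ᵥ x) := by
      rw [hxw]
      exact rayleigh_lower horw hevw hmonoβ p cB
        (fun i hi => hcBs i (by simpa [Finset.mem_Ici] using hi))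
    have h2 : (liftMap m x) ⬝ᵥ (lap A *ᵥ (liftMap m x)) ≤
        α p.succ * ((liftMap m x) ⬝ᵥ (liftMap m x)) := by
      rw [hxu]
      exact rayleigh_upper horu hevu hmonoα p.succ cA
        (fun i hi => hcAs i (by simpa [Finset.mem_Iic] using hi))
    have h3 := liftMap_dot x x
    have h4 := liftMap_quad (lap A) x
    have h5 := hclose x
    rw [h3, h4] at h2
    rw [abs_le] at h5
    have hineq : β p * (x ⬝ᵥ x) ≤ (α p.succ + 1) * (x ⬝ᵥ x) := by
      have h5a := h5.1
      nlinarith [h1, h2, h5a]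
    have := le_of_mul_le_mul_right hineq ht
    linarith
end

section
/- Let m ≥ 2. Let Γ = (P_{m+1}, σ_1) be a signed path of order m+1 with an arbitrary signature σ_1 and ordered Laplacian spectrum (α_1, α_2, …, α_{m+1}), and let Γ' = (P_m, σ_2) be a signed path of order m with an arbitrary signature σ_2 and ordered Laplacian spectrum (β_1, β_2, …, β_m). Then α_p ≤ β_p ≤ α_{p+1} for every p = 1, 2, …, m. -/
open Polynomial

/-- A signed path on `Fin n`: vertices `i` and `j` are adjacent iff their indices are
consecutive. -/
def IsSignedPath {n : ℕ} (A : Matrix (Fin n) (Fin n) ℝ) : Prop :=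
  IsSignedAdj A ∧ ∀ i j : Fin n, A i j ≠ 0 ↔ (j.val = i.val + 1 ∨ i.val = j.val + 1)

-- uniqueness of monotone root list
lemma ordered_unique {n : ℕ} {μ ν : Fin n → ℝ} (hμ : Monotone μ) (hν : Monotone ν)
    (h : (∏ i, (X - C (μ i)) : ℝ[X]) = ∏ i, (X - C (ν i))) : μ = ν := by
  have hr : Multiset.map μ Finset.univ.val = Multiset.map ν Finset.univ.val := by
    have h1 : (∏ i, (X - C (μ i)) : ℝ[X]).roots = Multiset.map μ Finset.univ.val := by
      rw [Finset.prod_eq_multiset_prod]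
      rw [show Multiset.map (fun i => X - C (μ i)) Finset.univ.val
        = Multiset.map (fun r => X - C r) (Multiset.map μ Finset.univ.val) by
          rw [Multiset.map_map]; rfl]
      exact roots_multiset_prod_X_sub_C _
    have h2 : (∏ i, (X - C (ν i)) : ℝ[X]).roots = Multiset.map ν Finset.univ.val := by
      rw [Finset.prod_eq_multiset_prod]
      rw [show Multiset.map (fun i => X - C (ν i)) Finset.univ.val
        = Multiset.map (fun r => X - C r) (Multiset.map ν Finset.univ.val) by
          rw [Multiset.map_map]; rfl]
      exact roots_multiset_prod_X_sub_C _
    rw [← h1, ← h2, h]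
  rw [Fin.univ_val_map, Fin.univ_val_map] at hr
  have hperm : List.Perm (List.ofFn μ) (List.ofFn ν) := Multiset.coe_eq_coe.mp hr
  have := List.Perm.eq_of_sortedLE (List.sortedLE_ofFn_iff.mpr hμ)
    (List.sortedLE_ofFn_iff.mpr hν) hperm
  exact List.ofFn_injective this

lemma charpoly_eq_prod {n : ℕ} {p : ℝ[X]} (hm : p.Monic) (hdeg : p.natDegree = n)
    (μ : Fin n → ℝ) (hinj : Function.Injective μ) (hroot : ∀ k, p.IsRoot (μ k)) :
    p = ∏ k, (X - C (μ k)) := by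
  have hp0 : p ≠ 0 := hm.ne_zero
  set m0 : Multiset ℝ := Multiset.map μ Finset.univ.val with hm0
  have hnd : m0.Nodup := Multiset.Nodup.map hinj Finset.univ.nodup
  have hle : m0 ≤ p.roots := by
    rw [Multiset.le_iff_subset hnd]
    intro a ha
    rw [hm0, Multiset.mem_map] at ha
    obtain ⟨k, _, rfl⟩ := ha
    exact (mem_roots hp0).mpr (hroot k)
  have hcard : m0.card = n := by simp [hm0]
  have hcard2 : p.roots.card = p.natDegree := le_antisymm (card_roots' p)
    (by rw [hdeg, ← hcard]; exact Multiset.card_le_card hle)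
  have hroots : p.roots = m0 := (Multiset.eq_of_le_of_card_le hle
    (by rw [hcard, ← hdeg, ← hcard2])).symm
  have hsplit : p.Splits := splits_iff_card_roots.mpr hcard2
  rw [hsplit.eq_prod_roots_of_monic hm, hroots, hm0, Multiset.map_map,
    Finset.prod_eq_multiset_prod]
  rfl

lemma charpoly_eval {n : ℕ} (M : Matrix (Fin n) (Fin n) ℝ) (x : ℝ) :
    M.charpoly.eval x = (Matrix.diagonal (fun _ => x) - M).det := by
  rw [Matrix.charpoly]
  have h1 : (Matrix.charmatrix M).det.eval x
      = ((evalRingHom x).mapMatrix (Matrix.charmatrix M)).det := by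
    exact (evalRingHom x).map_det M.charmatrix
  rw [h1]
  have h2 : (evalRingHom x).mapMatrix (Matrix.charmatrix M) = (Matrix.charmatrix M).map (evalRingHom x) := rfl
  rw [h2]
  congr 1
  ext i j
  by_cases h : i = j
  · subst h
    simp [Matrix.charmatrix_apply_eq, Matrix.diagonal_apply_eq]
  · simp [Matrix.charmatrix_apply_ne _ _ _ h, Matrix.diagonal_apply_ne _ h, h]

lemma root_of_eigen {n : ℕ} (M : Matrix (Fin n) (Fin n) ℝ) (x : ℝ) (w : Fin n → ℝ)
    (hw : w ≠ 0) (h : M.mulVec w = x • w) : M.charpoly.IsRoot x := by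
  have h0 : (Matrix.diagonal (fun _ => x) - M).mulVec w = 0 := by
    rw [Matrix.sub_mulVec]
    funext i
    simp [Matrix.mulVec_diagonal, h, mul_comm]
  have hdet : (Matrix.diagonal (fun _ : Fin n => x) - M).det = 0 :=
    Matrix.exists_mulVec_eq_zero_iff.mp ⟨w, hw, h0⟩
  rw [IsRoot, charpoly_eval, hdet]


lemma deg_path {n : ℕ} {A : Matrix (Fin n) (Fin n) ℝ} (hA : IsSignedPath A) (i : Fin n) :
    deg A i = (if 0 < i.val then 1 else 0) + (if i.val + 1 < n then 1 else 0) := by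
  have hset : {j | A i j ≠ 0} = {j : Fin n | j.val = i.val + 1 ∨ i.val = j.val + 1} := by
    ext j; exact hA.2 i j
  have hi := i.isLt
  rw [deg, hset]
  by_cases h1 : 0 < i.val <;> by_cases h2 : i.val + 1 < n
  · rw [if_pos h1, if_pos h2]
    have hs : {j : Fin n | j.val = i.val + 1 ∨ i.val = j.val + 1}
        = {(⟨i.val + 1, h2⟩ : Fin n), ⟨i.val - 1, by omega⟩} := by
      ext j; have hj := j.isLt
      simp only [Set.mem_setOf_eq, Set.mem_insert_iff, Set.mem_singleton_iff, Fin.ext_iff]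
      omega
    rw [hs, Set.ncard_pair (by simp only [ne_eq, Fin.ext_iff]; omega)]
  · rw [if_pos h1, if_neg h2]
    have hs : {j : Fin n | j.val = i.val + 1 ∨ i.val = j.val + 1}
        = {(⟨i.val - 1, by omega⟩ : Fin n)} := by
      ext j; have hj := j.isLt
      simp only [Set.mem_setOf_eq, Set.mem_singleton_iff, Fin.ext_iff]
      omega
    rw [hs, Set.ncard_singleton]
  · rw [if_neg h1, if_pos h2]
    have hs : {j : Fin n | j.val = i.val + 1 ∨ i.val = j.val + 1}
        = {(⟨i.val + 1, h2⟩ : Fin n)} := by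
      ext j; have hj := j.isLt
      simp only [Set.mem_setOf_eq, Set.mem_singleton_iff, Fin.ext_iff]
      omega
    rw [hs, Set.ncard_singleton]
  · rw [if_neg h1, if_neg h2]
    have hs : {j : Fin n | j.val = i.val + 1 ∨ i.val = j.val + 1} = (∅ : Set (Fin n)) := by
      ext j; have hj := j.isLt
      simp only [Set.mem_setOf_eq, Set.mem_empty_iff_false, iff_false]
      omega
    rw [hs, Set.ncard_empty]





noncomputable def lamv (n k : ℕ) : ℝ := 2 - 2 * Real.cos (k * Real.pi / n)

lemma lam_strictMono {n : ℕ} : StrictMono (fun k : Fin n => lamv n k.val) := by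
  intro k k' hkk
  have hn : (0:ℝ) < n := by
    have := k.pos
    exact_mod_cast this
  have hπ := Real.pi_pos
  have hk' : (k'.val : ℝ) ≤ n := by exact_mod_cast k'.isLt.le
  have hkk' : (k.val : ℝ) < k'.val := by exact_mod_cast hkk
  have hcos : Real.cos ((k'.val : ℝ) * Real.pi / n) < Real.cos ((k.val : ℝ) * Real.pi / n) := by
    apply Real.cos_lt_cos_of_nonneg_of_le_pi
    · positivity
    · rw [div_le_iff₀ hn]
      nlinarith [mul_le_mul_of_nonneg_right hk' hπ.le]
    · rw [div_lt_div_iff₀ hn hn]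
      nlinarith [mul_lt_mul_of_pos_right hkk' (mul_pos hπ hn)]
  simp only [lamv]
  linarith

lemma sum_two {n : ℕ} (f : Fin n → ℝ) (a b : Fin n) (hab : a ≠ b)
    (h : ∀ c, c ≠ a → c ≠ b → f c = 0) : ∑ c, f c = f a + f b := by
  rw [← Finset.sum_pair hab]
  refine (Finset.sum_subset (Finset.subset_univ _) ?_).symm
  intro x _ hx
  simp only [Finset.mem_insert, Finset.mem_singleton] at hx
  push_neg at hx
  exact h x hx.1 hx.2

lemma trig2 (y : ℝ) : Real.cos (2*y + y) = (2 * Real.cos (2*y) - 1) * Real.cos y := by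
  rw [Real.cos_add, Real.cos_two_mul, Real.sin_two_mul]
  linear_combination (-2 * Real.cos y) * Real.sin_sq_add_cos_sq y

lemma charpoly_lap_path {n : ℕ} (hn : 2 ≤ n) {A : Matrix (Fin n) (Fin n) ℝ}
    (hA : IsSignedPath A) :
    (lap A).charpoly = ∏ k : Fin n, (X - C (lamv n k.val)) := by
  refine charpoly_eq_prod (Matrix.charpoly_monic _)
    (by rw [Matrix.charpoly_natDegree_eq_dim, Fintype.card_fin]) _
    lam_strictMono.injective ?_
  intro k
  set θ : ℝ := (k.val : ℝ) * Real.pi / n with hθ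
  set a : ℕ → ℝ := fun t => if h : t + 1 < n then A ⟨t, by omega⟩ ⟨t + 1, h⟩ else 1 with haa
  have ha1 : ∀ t, a t = 1 ∨ a t = -1 := by
    intro t
    simp only [haa]
    by_cases h : t + 1 < n
    · rw [dif_pos h]
      have hne : A ⟨t, by omega⟩ ⟨t + 1, h⟩ ≠ 0 := (hA.2 _ _).mpr (Or.inl rfl)
      rcases hA.1.2.2 ⟨t, by omega⟩ ⟨t + 1, h⟩ with h' | h' | h'
      · right; exact h'
      · exact absurd h' hne
      · left; exact h'
    · rw [dif_neg h]; left; rfl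
  have ha2 : ∀ t, a t * a t = 1 := by
    intro t; rcases ha1 t with h | h <;> rw [h] <;> norm_num
  set d : Fin n → ℝ := fun i => ∏ t ∈ Finset.range i.val, a t with hdd
  set v : Fin n → ℝ := fun j => Real.cos (((j.val : ℝ) + 1/2) * θ) with hvv
  set w : Fin n → ℝ := fun j => d j * v j with hww
  have hwne : w ≠ 0 := by
    intro hcontr
    have hw0 : w ⟨0, by omega⟩ = 0 := by rw [hcontr]; rfl
    rw [hww] at hw0
    simp only at hw0
    have hd0 : d ⟨0, by omega⟩ = 1 := by simp only [hdd]; simp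
    rw [hd0, one_mul, hvv] at hw0
    simp only [Fin.val_mk, Nat.cast_zero, zero_add] at hw0
    have hn0 : (0:ℝ) < n := by positivity
    have hπ := Real.pi_pos
    have hθnn : (0:ℝ) ≤ θ := by rw [hθ]; positivity
    have hkn : (k.val : ℝ) < n := by exact_mod_cast k.isLt
    have hθπ : θ < Real.pi := by
      rw [hθ, div_lt_iff₀ hn0]
      nlinarith [mul_lt_mul_of_pos_right hkn hπ]
    have hθlt : 1/2 * θ < Real.pi / 2 := by linarith
    have hpos : Real.cos (1/2 * θ) > 0 :=
      Real.cos_pos_of_mem_Ioo ⟨by nlinarith, hθlt⟩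
    linarith [hw0 ▸ hpos]
  refine root_of_eigen _ (lamv n k.val) w hwne ?_
  funext i
  have hi := i.isLt
  show ∑ j, lap A i j * w j = lamv n k.val * w i
  have hlamθ : lamv n k.val = 2 - 2 * Real.cos θ := by rw [lamv, hθ]
  have hlap : ∀ j, lap A i j * w j
      = (if j = i then ((deg A i : ℝ) * w i) else 0) - A i j * w j := by
    intro j
    rw [lap, Matrix.sub_apply, Matrix.diagonal_apply]
    by_cases h : j = i
    · subst h
      rw [if_pos rfl, if_pos rfl, hA.1.2.1 j]
      ring
    · rw [if_neg h, if_neg (fun hh => h hh.symm)]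
      ring
  rw [Finset.sum_congr rfl fun j _ => hlap j, Finset.sum_sub_distrib,
    Finset.sum_ite_eq' Finset.univ i, if_pos (Finset.mem_univ i)]
  -- helper facts
  have hup : ∀ (h2 : i.val + 1 < n),
      A i ⟨i.val + 1, h2⟩ * w ⟨i.val + 1, h2⟩ = d i * v ⟨i.val + 1, h2⟩ := by
    intro h2
    have hAa : A i ⟨i.val + 1, h2⟩ = a i.val := by
      simp only [haa]; rw [dif_pos h2]
    have hdstep : d ⟨i.val + 1, h2⟩ = d i * a i.val := by
      simp only [hdd, Fin.val_mk]
      exact Finset.prod_range_succ a i.val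
    rw [hww]
    simp only
    rw [hAa, hdstep]
    linear_combination d i * v ⟨i.val + 1, h2⟩ * ha2 i.val
  have hdown : ∀ (h1 : 0 < i.val),
      A i ⟨i.val - 1, by omega⟩ * w ⟨i.val - 1, by omega⟩
        = d i * v ⟨i.val - 1, by omega⟩ := by
    intro h1
    have hsym : A i ⟨i.val - 1, by omega⟩ = A ⟨i.val - 1, by omega⟩ i :=
      (hA.1.1.apply i ⟨i.val - 1, by omega⟩).symm
    have hAa : A (⟨i.val - 1, by omega⟩ : Fin n) i = a (i.val - 1) := by
      simp only [haa]
      rw [dif_pos (show i.val - 1 + 1 < n by omega)]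
      congr 1
      apply Fin.ext
      simp only [Fin.val_mk]
      omega
    have hdstep : d i = d ⟨i.val - 1, by omega⟩ * a (i.val - 1) := by
      simp only [hdd, Fin.val_mk]
      rw [← Finset.prod_range_succ,
        show i.val - 1 + 1 = i.val from by omega]
    rw [hww]
    simp only
    rw [hsym, hAa]
    linear_combination v (⟨i.val - 1, by omega⟩ : Fin n) * hdstep.symm
  by_cases h1 : 0 < i.val <;> by_cases h2 : i.val + 1 < n
  · -- interior
    have hdeg2 : (deg A i : ℝ) = 2 := by
      rw [deg_path hA i, if_pos h1, if_pos h2]; norm_num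
    have hsum : ∑ j, A i j * w j
        = A i ⟨i.val + 1, h2⟩ * w ⟨i.val + 1, h2⟩
          + A i ⟨i.val - 1, by omega⟩ * w ⟨i.val - 1, by omega⟩ := by
      apply sum_two
      · simp only [ne_eq, Fin.ext_iff, Fin.val_mk]; omega
      · intro c hca hcb
        have hc0 : A i c = 0 := by
          by_contra hc
          rcases (hA.2 i c).mp hc with h' | h'
          · exact hca (Fin.ext (by simp only [Fin.val_mk]; omega))
          · exact hcb (Fin.ext (by simp only [Fin.val_mk]; omega))
        rw [hc0, zero_mul]
    have htrig : v ⟨i.val + 1, h2⟩ + v ⟨i.val - 1, by omega⟩ = 2 * Real.cos θ * v i := by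
      simp only [hvv, Fin.val_mk]
      rw [Nat.cast_sub (by omega : 1 ≤ i.val), Nat.cast_add, Nat.cast_one]
      rw [show ((i.val:ℝ) + 1 + 1/2) * θ = ((i.val:ℝ) + 1/2) * θ + θ by ring,
        show ((i.val:ℝ) - 1 + 1/2) * θ = ((i.val:ℝ) + 1/2) * θ - θ by ring,
        Real.cos_add, Real.cos_sub]
      ring
    rw [hsum, hup h2, hdown h1, hdeg2, hlamθ, hww]
    simp only
    linear_combination (-(d i)) * htrig
  · -- right end : i.val = n - 1
    have hdeg1 : (deg A i : ℝ) = 1 := by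
      rw [deg_path hA i, if_pos h1, if_neg h2]; norm_num
    have hsum : ∑ j, A i j * w j
        = A i ⟨i.val - 1, by omega⟩ * w ⟨i.val - 1, by omega⟩ := by
      apply Fintype.sum_eq_single
      intro c hc
      have hc0 : A i c = 0 := by
        by_contra hcc
        rcases (hA.2 i c).mp hcc with h' | h'
        · have := c.isLt; omega
        · exact hc (Fin.ext (by simp only [Fin.val_mk]; omega))
      rw [hc0, zero_mul]
    have hnR : (0:ℝ) < n := by positivity
    have hnθ : (n:ℝ) * θ = (k.val : ℝ) * Real.pi := by
      rw [hθ]; field_simp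
    have htrig : v ⟨i.val - 1, by omega⟩ = (2 * Real.cos θ - 1) * v i := by
      simp only [hvv, Fin.val_mk]
      have hin : i.val = n - 1 := by omega
      rw [hin, Nat.cast_sub (by omega : 1 ≤ n - 1), Nat.cast_sub (by omega : 1 ≤ n),
        Nat.cast_one]
      rw [show ((n:ℝ) - 1 - 1 + 1/2) * θ = (k.val : ℝ) * Real.pi - (2*(θ/2) + θ/2) by
          rw [← hnθ]; ring,
        show ((n:ℝ) - 1 + 1/2) * θ = (k.val : ℝ) * Real.pi - θ/2 by rw [← hnθ]; ring,
        Real.cos_sub, Real.cos_sub, Real.sin_nat_mul_pi, trig2 (θ/2),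
        show 2*(θ/2) = θ by ring]
      ring
    rw [hsum, hdown h1, hdeg1, hlamθ, hww]
    simp only
    linear_combination (-(d i)) * htrig
  · -- left end : i.val = 0
    have hdeg1 : (deg A i : ℝ) = 1 := by
      rw [deg_path hA i, if_neg h1, if_pos h2]; norm_num
    have hsum : ∑ j, A i j * w j
        = A i ⟨i.val + 1, h2⟩ * w ⟨i.val + 1, h2⟩ := by
      apply Fintype.sum_eq_single
      intro c hc
      have hc0 : A i c = 0 := by
        by_contra hcc
        rcases (hA.2 i c).mp hcc with h' | h'
        · exact hc (Fin.ext (by simp only [Fin.val_mk]; omega))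
        · omega
      rw [hc0, zero_mul]
    have htrig : v ⟨i.val + 1, h2⟩ = (2 * Real.cos θ - 1) * v i := by
      simp only [hvv, Fin.val_mk]
      have hin : i.val = 0 := by omega
      rw [hin, Nat.cast_add, Nat.cast_zero, Nat.cast_one]
      rw [show ((0:ℝ) + 1 + 1/2) * θ = 2*(θ/2) + θ/2 by ring,
        show ((0:ℝ) + 1/2) * θ = θ/2 by ring, trig2 (θ/2),
        show 2*(θ/2) = θ by ring]
    rw [hsum, hup h2, hdeg1, hlamθ, hww]
    simp only
    linear_combination (-(d i)) * htrig
  · omega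

/-- for arbitrary signed paths of orders m+1 and m (m >= 2),
alpha_p <= beta_p <= alpha_{p+1} for p = 1,...,m. -/
theorem stmt6 (m : ℕ) (hm : 2 ≤ m)
    (A : Matrix (Fin (m+1)) (Fin (m+1)) ℝ) (hA : IsSignedPath A)
    (B : Matrix (Fin m) (Fin m) ℝ) (hB : IsSignedPath B)
    (α : Fin (m+1) → ℝ) (β : Fin m → ℝ)
    (hα : IsOrderedSpectrum (lap A) α) (hβ : IsOrderedSpectrum (lap B) β) :
    ∀ p : Fin m, α p.castSucc ≤ β p ∧ β p ≤ α p.succ := by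
  have hαeq : α = fun p : Fin (m+1) => lamv (m+1) p.val :=
    ordered_unique hα.1 lam_strictMono.monotone
      (by rw [← hα.2, charpoly_lap_path (by omega) hA])
  have hβeq : β = fun p : Fin m => lamv m p.val :=
    ordered_unique hβ.1 lam_strictMono.monotone
      (by rw [← hβ.2, charpoly_lap_path hm hB])
  intro p
  have hp := p.isLt
  have hπ := Real.pi_pos
  have hm0 : (0:ℝ) < m := by positivity
  have hm1 : (0:ℝ) < (m:ℝ) + 1 := by positivity
  have hpm : (p.val : ℝ) < m := by exact_mod_cast hp
  have hpnn : (0:ℝ) ≤ (p.val : ℝ) := by positivity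
  rw [hαeq, hβeq]
  simp only [Fin.coe_castSucc, Fin.val_succ, lamv]
  push_cast
  constructor
  · have hcos : Real.cos ((p.val : ℝ) * Real.pi / m)
        ≤ Real.cos ((p.val : ℝ) * Real.pi / ((m:ℝ) + 1)) := by
      apply Real.cos_le_cos_of_nonneg_of_le_pi
      · positivity
      · rw [div_le_iff₀ hm0]
        nlinarith
      · rw [div_le_div_iff₀ hm1 hm0]
        nlinarith
    linarith
  · have hcos : Real.cos (((p.val : ℝ) + 1) * Real.pi / ((m:ℝ) + 1))
        ≤ Real.cos ((p.val : ℝ) * Real.pi / m) := by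
      apply Real.cos_le_cos_of_nonneg_of_le_pi
      · positivity
      · rw [div_le_iff₀ hm1]
        nlinarith
      · rw [div_le_div_iff₀ hm0 hm1]
        nlinarith
    linarith
end

section
/- Let Γ be a signed graph of order m with ordered Laplacian spectrum (α_1, α_2, …, α_m) and ordered net-Laplacian spectrum (β_1, β_2, …, β_m). Let δ⁻(Γ) = min_i d_i⁻ and Δ⁻(Γ) = max_i d_i⁻ be the minimum and maximum negative vertex degrees of Γ. Then β_p + 2·δ⁻(Γ) ≤ α_p ≤ β_p + 2·Δ⁻(Γ) for every p = 1, 2, …, m. -/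
open Polynomial

section Aux

open Matrix Finset

variable {n : ℕ}

/-- charpoly is invariant under unitary conjugation. -/
lemma charpoly_conj_unitary (U D : Matrix (Fin n) (Fin n) ℝ)
    (hU : U * star U = 1) (hU' : star U * U = 1) :
    (U * D * star U).charpoly = D.charpoly := by
  have hmap : ∀ P Q : Matrix (Fin n) (Fin n) ℝ,
      (P * Q).map (C : ℝ →+* ℝ[X]) = P.map C * Q.map C := fun P Q => Matrix.map_mul
  have key : charmatrix (U * D * star U) =
      U.map (C : ℝ →+* ℝ[X]) * charmatrix D * (star U).map (C : ℝ →+* ℝ[X]) := by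
    simp only [charmatrix, RingHom.mapMatrix_apply]
    rw [Matrix.mul_sub, Matrix.sub_mul, hmap, hmap]
    congr 1
    calc (scalar (Fin n)) X
        = (scalar (Fin n)) X * (U.map (C : ℝ →+* ℝ[X]) * (star U).map (C : ℝ →+* ℝ[X])) := by
          rw [← hmap, hU, Matrix.map_one _ (map_zero _) (map_one _), mul_one]
      _ = U.map (C : ℝ →+* ℝ[X]) * (scalar (Fin n)) X * (star U).map (C : ℝ →+* ℝ[X]) := by
          rw [← mul_assoc, (scalar_commute X (fun r => Commute.all X r) _).eq]
  rw [Matrix.charpoly, key, det_mul, det_mul, Matrix.charpoly, mul_comm (det _),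
    mul_assoc, ← det_mul, ← hmap, hU, Matrix.map_one _ (map_zero _) (map_one _), det_one, mul_one]

lemma herm_charpoly {M : Matrix (Fin n) (Fin n) ℝ} (hM : M.IsHermitian) :
    M.charpoly = ∏ i, (X - C (hM.eigenvalues i)) := by
  have h1 : M.charpoly = (Matrix.diagonal (RCLike.ofReal ∘ hM.eigenvalues)).charpoly := by
    conv_lhs => rw [hM.spectral_theorem]
    exact charpoly_conj_unitary _ _
      (Matrix.mem_unitaryGroup_iff.mp hM.eigenvectorUnitary.2)
      (Matrix.mem_unitaryGroup_iff'.mp hM.eigenvectorUnitary.2)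
  rw [h1, Matrix.charpoly_of_upperTriangular _ (Matrix.blockTriangular_diagonal _)]
  simp

/-- An ordered spectrum is the eigenvalue sequence composed with a permutation. -/
lemma spec_perm {M : Matrix (Fin n) (Fin n) ℝ} (hM : M.IsHermitian)
    {α : Fin n → ℝ} (h : IsOrderedSpectrum M α) :
    ∃ σ : Equiv.Perm (Fin n), ∀ i, α i = hM.eigenvalues (σ i) := by
  classical
  set ev := hM.eigenvalues with hev
  set τ := Tuple.sort ev with hτ
  refine ⟨τ, ?_⟩
  have hmono : Monotone (ev ∘ τ) := Tuple.monotone_sort ev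
  -- multiset equality of roots
  have hprod : (∏ i, (X - C (α i))) = ∏ i, (X - C (ev i)) := by
    rw [← h.2, herm_charpoly hM]
  have hroots : ∀ f : Fin n → ℝ,
      (∏ i, (X - C (f i))).roots = (Finset.univ.val.map f) := by
    intro f
    have : (∏ i, (X - C (f i))) = ((Finset.univ.val.map f).map fun a => X - C a).prod := by
      rw [Multiset.map_map]
      rfl
    rw [this, Polynomial.roots_multiset_prod_X_sub_C]
  have hms : Finset.univ.val.map α = Finset.univ.val.map ev := by
    have := congrArg Polynomial.roots hprod
    rwa [hroots, hroots] at this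
  have hmsτ : Finset.univ.val.map (ev ∘ τ) = Finset.univ.val.map ev := by
    have huniv : Finset.univ.val.map (τ : Fin n → Fin n) = Finset.univ.val := by
      have := congrArg Finset.val (Finset.map_univ_equiv τ)
      simpa [Finset.map_val] using this
    calc Finset.univ.val.map (ev ∘ τ) = (Finset.univ.val.map (τ : Fin n → Fin n)).map ev := by
          rw [Multiset.map_map]
      _ = Finset.univ.val.map ev := by rw [huniv]
  -- to lists
  have hlist : ∀ f : Fin n → ℝ, Finset.univ.val.map f = ((List.ofFn f : List ℝ) : Multiset ℝ) := by
    intro f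
    rw [Fin.univ_def]
    show ((List.finRange n : List (Fin n)) : Multiset (Fin n)).map f = _
    rw [Multiset.map_coe, List.ofFn_eq_map]
  have hperm : (List.ofFn α).Perm (List.ofFn (ev ∘ τ)) := by
    rw [← Multiset.coe_eq_coe, ← hlist, ← hlist, hms, hmsτ]
  have heq : List.ofFn α = List.ofFn (ev ∘ τ) :=
    List.Perm.eq_of_sortedLE
      (List.sortedLE_ofFn_iff.mpr h.1) (List.sortedLE_ofFn_iff.mpr hmono) hperm
  intro i
  have := List.ofFn_inj.mp heq
  exact congrFun this i

end Aux
section Aux2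

open Matrix Finset Module
open scoped InnerProductSpace

variable {n : ℕ}

local notation "E" => EuclideanSpace ℝ (Fin n)

lemma span_repr_zero (b : OrthonormalBasis (Fin n) ℝ (EuclideanSpace ℝ (Fin n)))
    (s : Set (Fin n)) {x : EuclideanSpace ℝ (Fin n)}
    (hx : x ∈ Submodule.span ℝ (⇑b '' s)) {j : Fin n} (hj : j ∉ s) :
    b.repr x j = 0 := by
  induction hx using Submodule.span_induction with
  | mem y hy =>
      obtain ⟨i, his, rfl⟩ := hy
      rw [OrthonormalBasis.repr_self]
      have : j ≠ i := fun h => hj (h ▸ his)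
      simp only [EuclideanSpace.single_apply]
      rw [if_neg this]
  | zero => simp
  | add y z _ _ hy hz => simp [hy, hz]
  | smul a y _ hy => simp [hy]

lemma euclid_inner_sum (f g : EuclideanSpace ℝ (Fin n)) : ⟪f, g⟫_ℝ = ∑ i, f i * g i := by
  simp only [PiLp.inner_apply, RCLike.inner_apply, starRingEnd_apply, star_trivial]
  exact Finset.sum_congr rfl fun i _ => mul_comm _ _

lemma inner_toEuclideanLin_repr {M : Matrix (Fin n) (Fin n) ℝ} (hM : M.IsHermitian)
    (x : EuclideanSpace ℝ (Fin n)) :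
    ⟪x, Matrix.toEuclideanLin M x⟫_ℝ
      = ∑ j, hM.eigenvalues j * (hM.eigenvectorBasis.repr x j) ^ 2 := by
  set b := hM.eigenvectorBasis with hb
  set T := Matrix.toEuclideanLin M with hT
  have hsym : LinearMap.IsSymmetric T := Matrix.isHermitian_iff_isSymmetric.mp hM
  have hTb : ∀ j, T (b j) = hM.eigenvalues j • b j := by
    intro j
    apply PiLp.ext
    intro i
    have := congrFun (hM.mulVec_eigenvectorBasis j) i
    simpa [hT, Matrix.toEuclideanLin_apply] using this
  have hrepr : ∀ j, b.repr (T x) j = hM.eigenvalues j * b.repr x j := by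
    intro j
    rw [b.repr_apply_apply, b.repr_apply_apply, ← hsym (b j) x, hTb j]
    exact real_inner_smul_left _ _ _
  calc ⟪x, T x⟫_ℝ = ⟪b.repr x, b.repr (T x)⟫_ℝ := (b.repr.inner_map_map x (T x)).symm
    _ = ∑ j, (b.repr x j) * (b.repr (T x) j) := euclid_inner_sum _ _
    _ = ∑ j, hM.eigenvalues j * (b.repr x j) ^ 2 := by
        refine Finset.sum_congr rfl fun j _ => ?_
        rw [hrepr j]; ring

lemma norm_sq_repr {M : Matrix (Fin n) (Fin n) ℝ} (hM : M.IsHermitian)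
    (x : EuclideanSpace ℝ (Fin n)) :
    ‖x‖ ^ 2 = ∑ j, (hM.eigenvectorBasis.repr x j) ^ 2 := by
  set b := hM.eigenvectorBasis
  calc ‖x‖ ^ 2 = ⟪x, x⟫_ℝ := (real_inner_self_eq_norm_sq x).symm
    _ = ⟪b.repr x, b.repr x⟫_ℝ := (b.repr.inner_map_map x x).symm
    _ = ∑ j, (b.repr x j) * (b.repr x j) := euclid_inner_sum _ _
    _ = ∑ j, (b.repr x j) ^ 2 := by simp [sq]

lemma quad_le {M : Matrix (Fin n) (Fin n) ℝ} (hM : M.IsHermitian)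
    (s : Set (Fin n)) (r : ℝ) (hr : ∀ i ∈ s, hM.eigenvalues i ≤ r)
    {x : EuclideanSpace ℝ (Fin n)}
    (hx : x ∈ Submodule.span ℝ (⇑hM.eigenvectorBasis '' s)) :
    ⟪x, Matrix.toEuclideanLin M x⟫_ℝ ≤ r * ‖x‖ ^ 2 := by
  rw [inner_toEuclideanLin_repr hM x, norm_sq_repr hM x, Finset.mul_sum]
  refine Finset.sum_le_sum fun j _ => ?_
  by_cases hj : j ∈ s
  · exact mul_le_mul_of_nonneg_right (hr j hj) (sq_nonneg _)
  · rw [span_repr_zero hM.eigenvectorBasis s hx hj]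
    simp

lemma quad_ge {M : Matrix (Fin n) (Fin n) ℝ} (hM : M.IsHermitian)
    (s : Set (Fin n)) (r : ℝ) (hr : ∀ i ∈ s, r ≤ hM.eigenvalues i)
    {x : EuclideanSpace ℝ (Fin n)}
    (hx : x ∈ Submodule.span ℝ (⇑hM.eigenvectorBasis '' s)) :
    r * ‖x‖ ^ 2 ≤ ⟪x, Matrix.toEuclideanLin M x⟫_ℝ := by
  rw [inner_toEuclideanLin_repr hM x, norm_sq_repr hM x, Finset.mul_sum]
  refine Finset.sum_le_sum fun j _ => ?_
  by_cases hj : j ∈ s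
  · exact mul_le_mul_of_nonneg_right (hr j hj) (sq_nonneg _)
  · rw [span_repr_zero hM.eigenvectorBasis s hx hj]
    simp

lemma psd_inner_nonneg {M : Matrix (Fin n) (Fin n) ℝ} (h : M.PosSemidef)
    (x : EuclideanSpace ℝ (Fin n)) :
    0 ≤ ⟪x, Matrix.toEuclideanLin M x⟫_ℝ := by
  have := h.dotProduct_mulVec_nonneg (fun i => x i)
  simpa [PiLp.inner_apply, RCLike.inner_apply, conj_trivial, Matrix.toEuclideanLin_apply,
    dotProduct, Matrix.mulVec, mul_comm] using this

/-- Core eigenvalue comparison via subspace intersection. -/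
lemma core {B C : Matrix (Fin n) (Fin n) ℝ} (hB : B.IsHermitian) (hC : C.IsHermitian)
    {c : ℝ} (h : (B - C - c • 1).PosSemidef)
    {α β : Fin n → ℝ} (hα : IsOrderedSpectrum B α) (hβ : IsOrderedSpectrum C β)
    (p : Fin n) : β p + c ≤ α p := by
  classical
  obtain ⟨σ, hσ⟩ := spec_perm hB hα
  obtain ⟨τ, hτ⟩ := spec_perm hC hβ
  set bB := hB.eigenvectorBasis with hbB
  set bC := hC.eigenvectorBasis with hbC
  set sV : Set (Fin n) := ⇑σ '' ↑(Finset.Iic p) with hsV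
  set sU : Set (Fin n) := ⇑τ '' ↑(Finset.Ici p) with hsU
  set V : Submodule ℝ (EuclideanSpace ℝ (Fin n)) := Submodule.span ℝ (⇑bB '' sV) with hV
  set U : Submodule ℝ (EuclideanSpace ℝ (Fin n)) := Submodule.span ℝ (⇑bC '' sU) with hU
  -- dimension of V
  have hrank : ∀ (b : OrthonormalBasis (Fin n) ℝ (EuclideanSpace ℝ (Fin n)))
      (e : Equiv.Perm (Fin n)) (t : Finset (Fin n)),
      finrank ℝ (Submodule.span ℝ (⇑b '' (⇑e '' ↑t))) = t.card := by
    intro b e t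
    have himg : ⇑b '' (⇑e '' ↑t) = Set.range (fun j : t => b (e j)) := by
      rw [← Set.image_comp]
      ext y
      simp [Set.mem_image]
    rw [himg]
    have hli : LinearIndependent ℝ (fun j : t => b (e j)) := by
      have := b.orthonormal.linearIndependent
      exact this.comp (fun j : t => e j) ((e.injective).comp Subtype.val_injective)
    rw [finrank_span_eq_card hli, Fintype.card_coe]
  have hdV : finrank ℝ V = p + 1 := by
    rw [hV, hsV, hrank, Fin.card_Iic]
  have hdU : finrank ℝ U = n - p := by
    rw [hU, hsU, hrank, Fin.card_Ici]
  -- intersection is nontrivial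
  have hfin : finrank ℝ (EuclideanSpace ℝ (Fin n)) = n := finrank_euclideanSpace_fin
  have hsum := Submodule.finrank_sup_add_finrank_inf_eq V U
  have hle : finrank ℝ ↥(V ⊔ U) ≤ n := le_trans (Submodule.finrank_le _) hfin.le
  have hpn : (p : ℕ) < n := p.2
  have hpos : 0 < finrank ℝ ↥(V ⊓ U) := by omega
  obtain ⟨x, hxVU, hx0⟩ : ∃ x ∈ V ⊓ U, x ≠ 0 := by
    haveI := Module.nontrivial_of_finrank_pos (R := ℝ) hpos
    obtain ⟨⟨y, hy⟩, h0⟩ := exists_ne (0 : ↥(V ⊓ U))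
    exact ⟨y, hy, fun hc => h0 (Subtype.ext hc)⟩
  have hxV : x ∈ V := hxVU.1
  have hxU : x ∈ U := hxVU.2
  -- quadratic bounds
  have h1 : ⟪x, Matrix.toEuclideanLin B x⟫_ℝ ≤ α p * ‖x‖ ^ 2 := by
    refine quad_le hB sV (α p) ?_ hxV
    rintro i ⟨j, hj, rfl⟩
    rw [← hσ j]
    exact hα.1 (Finset.mem_Iic.mp hj)
  have h2 : β p * ‖x‖ ^ 2 ≤ ⟪x, Matrix.toEuclideanLin C x⟫_ℝ := by
    refine quad_ge hC sU (β p) ?_ hxU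
    rintro i ⟨j, hj, rfl⟩
    rw [← hτ j]
    exact hβ.1 (Finset.mem_Ici.mp hj)
  have h3 : 0 ≤ ⟪x, Matrix.toEuclideanLin (B - C - c • 1) x⟫_ℝ := psd_inner_nonneg h x
  have hlin : ⟪x, Matrix.toEuclideanLin (B - C - c • 1) x⟫_ℝ
      = ⟪x, Matrix.toEuclideanLin B x⟫_ℝ - ⟪x, Matrix.toEuclideanLin C x⟫_ℝ - c * ‖x‖ ^ 2 := by
    have hone : Matrix.toEuclideanLin ((c • 1 : Matrix (Fin n) (Fin n) ℝ)) x = c • x := by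
      apply PiLp.ext
      intro i
      simp [Matrix.toEuclideanLin_apply, Matrix.mulVec, dotProduct, Matrix.smul_apply,
        Matrix.one_apply, ite_mul, Finset.sum_ite_eq, mul_comm]
    rw [map_sub, map_sub, LinearMap.sub_apply, LinearMap.sub_apply, inner_sub_right,
      inner_sub_right, hone, real_inner_smul_right, real_inner_self_eq_norm_sq]
  have hnx : 0 < ‖x‖ ^ 2 := by
    have : ‖x‖ ≠ 0 := norm_ne_zero_iff.mpr hx0
    positivity
  nlinarith [h1, h2, h3, hlin, hnx]

end Aux2
section Aux3

open Matrix Finset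

variable {n : ℕ}

lemma degrees_real {A : Matrix (Fin n) (Fin n) ℝ} (hA : IsSignedAdj A) (i : Fin n) :
    (deg A i : ℝ) - (∑ j, A i j) = 2 * (negDeg A i : ℝ) := by
  classical
  have hcount : ∀ (P : Fin n → Prop) [DecidablePred P],
      (({j | P j} : Set (Fin n)).ncard : ℝ) = ∑ j, if P j then (1:ℝ) else 0 := by
    intro P _
    rw [Set.ncard_eq_toFinset_card', Set.toFinset_setOf, Finset.sum_boole]
  have h1 : (deg A i : ℝ)
      = ∑ j, ((if A i j = 1 then (1:ℝ) else 0) + (if A i j = -1 then (1:ℝ) else 0)) := by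
    rw [show deg A i = ({j | A i j ≠ 0} : Set (Fin n)).ncard from rfl, hcount]
    refine Finset.sum_congr rfl fun j _ => ?_
    rcases hA.2.2 i j with h | h | h <;> norm_num [h]
  have h2 : (negDeg A i : ℝ) = ∑ j, (if A i j = -1 then (1:ℝ) else 0) := by
    rw [show negDeg A i = ({j | A i j = -1} : Set (Fin n)).ncard from rfl, hcount]
  have h3 : (∑ j, A i j)
      = ∑ j, ((if A i j = 1 then (1:ℝ) else 0) - (if A i j = -1 then (1:ℝ) else 0)) := by
    refine Finset.sum_congr rfl fun j _ => ?_
    rcases hA.2.2 i j with h | h | h <;> norm_num [h]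
  rw [h1, h2, h3, ← Finset.sum_sub_distrib, Finset.mul_sum]
  refine Finset.sum_congr rfl fun j _ => ?_
  ring

lemma signedAdj_isHermitian {A : Matrix (Fin n) (Fin n) ℝ} (hA : IsSignedAdj A) :
    A.IsHermitian := by
  have h := hA.1
  ext i j
  rw [Matrix.conjTranspose_apply, star_trivial]
  exact h.apply i j

end Aux3
/-- with delta = min negative degree and Delta = max negative degree,
beta_p + 2*delta <= alpha_p <= beta_p + 2*Delta, where alpha is the ordered Laplacian
spectrum and beta the ordered net-Laplacian spectrum. -/
theorem stmt8 (m : ℕ) (A : Matrix (Fin m) (Fin m) ℝ) (hA : IsSignedAdj A)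
    (α β : Fin m → ℝ)
    (hα : IsOrderedSpectrum (lap A) α) (hβ : IsOrderedSpectrum (netLap A) β)
    (δ Δ : ℕ)
    (hδ : IsLeast (Set.range fun i => negDeg A i) δ)
    (hΔ : IsGreatest (Set.range fun i => negDeg A i) Δ) :
    ∀ p : Fin m, β p + 2 * (δ : ℝ) ≤ α p ∧ α p ≤ β p + 2 * (Δ : ℝ) := by
  intro p
  have hAH := signedAdj_isHermitian hA
  have hL : (lap A).IsHermitian := (Matrix.isHermitian_diagonal _).sub hAH
  have hN : (netLap A).IsHermitian := (Matrix.isHermitian_diagonal _).sub hAH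
  have hdiff : lap A - netLap A = Matrix.diagonal (fun i => 2 * (negDeg A i : ℝ)) := by
    rw [show lap A = Matrix.diagonal (fun i => (deg A i : ℝ)) - A from rfl,
      show netLap A = Matrix.diagonal (fun i => ∑ j, A i j) - A from rfl,
      sub_sub_sub_cancel_right, Matrix.diagonal_sub]
    exact congrArg Matrix.diagonal (funext fun i => degrees_real hA i)
  have hδle : ∀ i, (δ : ℝ) ≤ (negDeg A i : ℝ) := fun i =>
    Nat.cast_le.mpr (hδ.2 ⟨i, rfl⟩)
  have hΔge : ∀ i, (negDeg A i : ℝ) ≤ (Δ : ℝ) := fun i =>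
    Nat.cast_le.mpr (hΔ.2 ⟨i, rfl⟩)
  constructor
  · have hpsd : (lap A - netLap A - (2 * (δ : ℝ)) • 1).PosSemidef := by
      rw [hdiff, Matrix.smul_one_eq_diagonal, Matrix.diagonal_sub]
      refine Matrix.PosSemidef.diagonal fun i => ?_
      have := hδle i
      show (0:ℝ) ≤ _
      linarith
    have := core hL hN hpsd hα hβ p
    linarith
  · have hpsd : (netLap A - lap A - (-(2 * (Δ : ℝ))) • 1).PosSemidef := by
      have heq : netLap A - lap A - (-(2 * (Δ : ℝ))) • 1
          = (2 * (Δ : ℝ)) • 1 - (lap A - netLap A) := by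
        rw [neg_smul, sub_neg_eq_add]
        abel
      rw [heq, hdiff, Matrix.smul_one_eq_diagonal, Matrix.diagonal_sub]
      refine Matrix.PosSemidef.diagonal fun i => ?_
      have := hΔge i
      show (0:ℝ) ≤ _
      linarith
    have := core hN hL hpsd hβ hα p
    linarith
end
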